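/- arXiv:2405.19772 — 3 statements merged into one kernel-verified Lean document; each statement's English description precedes it below -/
import Mathlib

section
/- For all real λ > 0, a > 0 and x ∈ ℝ, the operator T_{λ,a} preserves constants: ∫_{−∞}^{∞} κ^a_λ(x,ν) dν = 1. -/
open MeasureTheory Real Filter Topology

/-- The kernel associated with `a² + x²`. -/
noncomputable def κ (a lam x ν : ℝ) : ℝ :=
  (2 ^ (lam - 2) * lam * a ^ (lam - 1)) /
      (Real.pi * Real.Gamma lam * (a ^ 2 + x ^ 2) ^ (lam / 2)) *
    ‖Complex.Gamma ((lam * a + Complex.I * (lam * ν)) / (2 * a))‖ ^ 2 *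
    Real.exp (lam * ν / a * Real.arctan (x / a))

/-- The exponential-type operator `T_{λ,a}`. -/
noncomputable def T (a lam : ℝ) (f : ℝ → ℝ) (x : ℝ) : ℝ :=
  ∫ ν : ℝ, κ a lam x ν * f ν

namespace TConstAux

open Complex Set
open scoped FourierTransform ComplexConjugate


variable {E : Type*} [NormedAddCommGroup E] [NormedSpace ℝ E]

lemma integral_Ioi_comp_exp (g : ℝ → E) :
    ∫ s in Set.Ioi (0:ℝ), g s = ∫ y : ℝ, Real.exp y • g (Real.exp y) := by
  have h1 : ∀ x ∈ (Set.univ : Set ℝ), HasDerivWithinAt Real.exp (Real.exp x) Set.univ x :=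
    fun x _ => (Real.hasDerivAt_exp x).hasDerivWithinAt
  have h := integral_image_eq_integral_abs_deriv_smul MeasurableSet.univ h1
      (Real.exp_injective.injOn) g
  rw [Set.image_univ, Real.range_exp] at h
  rw [h, setIntegral_univ]
  refine integral_congr_ae (Filter.Eventually.of_forall fun y => ?_)
  simp [abs_of_pos (Real.exp_pos y)]

lemma integrableOn_Ioi_iff_comp_exp (g : ℝ → E) :
    IntegrableOn g (Set.Ioi (0:ℝ)) ↔ Integrable (fun y : ℝ => Real.exp y • g (Real.exp y)) := by
  have h1 : ∀ x ∈ (Set.univ : Set ℝ), HasDerivWithinAt Real.exp (Real.exp x) Set.univ x :=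
    fun x _ => (Real.hasDerivAt_exp x).hasDerivWithinAt
  have h := integrableOn_image_iff_integrableOn_abs_deriv_smul MeasurableSet.univ h1
      (Real.exp_injective.injOn) g
  rw [Set.image_univ, Real.range_exp] at h
  rw [h, integrableOn_univ]
  constructor <;> intro hh <;> refine hh.congr (Filter.Eventually.of_forall fun y => ?_) <;>
    simp [abs_of_pos (Real.exp_pos y)]

lemma integrableOn_rpow_mul_exp_neg {s r : ℝ} (hs : 0 < s) (hr : 0 < r) :
    IntegrableOn (fun t : ℝ => t ^ (s - 1) * Real.exp (-(r * t))) (Set.Ioi 0) := by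
  have h0 := Real.GammaIntegral_convergent hs
  have h1 : IntegrableOn (fun t : ℝ => Real.exp (-(r * t)) * (r * t) ^ (s - 1))
      (Set.Ioi 0) := by
    have := (integrableOn_Ioi_comp_mul_left_iff
      (fun x : ℝ => Real.exp (-x) * x ^ (s - 1)) 0 hr).2
    simpa using this (by simpa using h0)
  have h2 := h1.const_mul (r ^ (1 - s))
  refine IntegrableOn.congr_fun h2 (fun t ht => ?_) measurableSet_Ioi
  rw [mem_Ioi] at ht
  rw [Real.mul_rpow hr.le ht.le]
  have hrr : r ^ (1 - s) * r ^ (s - 1) = 1 := by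
    rw [← Real.rpow_add hr]; norm_num
  calc r ^ (1 - s) * (Real.exp (-(r * t)) * (r ^ (s - 1) * t ^ (s - 1)))
      = (r ^ (1 - s) * r ^ (s - 1)) * (t ^ (s - 1) * Real.exp (-(r * t))) := by ring
    _ = t ^ (s - 1) * Real.exp (-(r * t)) := by rw [hrr, one_mul]

lemma norm_cpow_mul_exp {t : ℝ} (ht : 0 < t) (z c : ℂ) :
    ‖(t:ℂ) ^ (z - 1) * Complex.exp (-(c * t))‖
      = t ^ (z.re - 1) * Real.exp (-(c.re * t)) := by
  rw [norm_mul,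
    Complex.norm_cpow_eq_rpow_re_of_pos ht, Complex.norm_exp]
  simp [Complex.sub_re]

lemma integrableOn_cpow_mul_exp {z c : ℂ} (hz : 0 < z.re) (hc : 0 < c.re) :
    IntegrableOn (fun t : ℝ => (t:ℂ) ^ (z - 1) * Complex.exp (-(c * t))) (Set.Ioi 0) := by
  constructor
  · refine ContinuousOn.aestronglyMeasurable (ContinuousOn.mul ?_ ?_) measurableSet_Ioi
    · apply continuousOn_of_forall_continuousAt
      intro x hx
      exact (continuousAt_cpow_const <| Complex.ofReal_mem_slitPlane.2 hx).comp
        Complex.continuous_ofReal.continuousAt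
    · exact (Complex.continuous_exp.comp (by continuity)).continuousOn
  · rw [← hasFiniteIntegral_norm_iff]
    refine HasFiniteIntegral.congr (integrableOn_rpow_mul_exp_neg hz hc).2 ?_
    apply (ae_restrict_iff' measurableSet_Ioi).mpr
    filter_upwards with t ht
    exact (norm_cpow_mul_exp ht z c).symm

lemma integral_cpow_mul_cexp_neg {z : ℂ} (hz : 0 < z.re) {c : ℂ} (hcc : 0 < c.re) :
    ∫ t : ℝ in Set.Ioi 0, (t:ℂ) ^ (z - 1) * Complex.exp (-(c * t))
      = c ^ (-z) * Complex.Gamma z := by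
  set U : Set ℂ := {w : ℂ | 0 < w.re} with hU
  have hUo : IsOpen U := isOpen_lt continuous_const Complex.continuous_re
  set F : ℂ → ℂ := fun w => ∫ t : ℝ in Set.Ioi 0, (t:ℂ) ^ (z - 1) * Complex.exp (-(w * t))
    with hF
  set G : ℂ → ℂ := fun w => w ^ (-z) * Complex.Gamma z with hG
  have hFa : AnalyticOnNhd ℂ F U := by
    refine DifferentiableOn.analyticOnNhd
      (fun w hw => DifferentiableAt.differentiableWithinAt ?_) hUo
    have hw : 0 < w.re := hw
    have hε0 : 0 < w.re / 2 := by positivity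
    have key := hasDerivAt_integral_of_dominated_loc_of_deriv_le
      (μ := volume.restrict (Set.Ioi 0)) (𝕜 := ℂ)
      (F := fun (u : ℂ) (t : ℝ) => (t:ℂ) ^ (z - 1) * Complex.exp (-(u * t)))
      (F' := fun (u : ℂ) (t : ℝ) => (t:ℂ) ^ (z - 1) * (Complex.exp (-(u * t)) * (-(t:ℂ))))
      (x₀ := w) (bound := fun t : ℝ => t ^ z.re * Real.exp (-(w.re / 2 * t))) (Metric.ball_mem_nhds w hε0)
      ?_ ?_ ?_ ?_ ?_ ?_
    · exact key.2.differentiableAt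
    · filter_upwards [hUo.mem_nhds hw] with u hu
      exact (integrableOn_cpow_mul_exp hz hu).aestronglyMeasurable
    · exact integrableOn_cpow_mul_exp hz hw
    · have hA := (integrableOn_cpow_mul_exp hz hw).aestronglyMeasurable
      have hB : AEStronglyMeasurable (fun t : ℝ => -(t:ℂ)) (volume.restrict (Set.Ioi 0)) :=
        (Complex.continuous_ofReal.neg).aestronglyMeasurable
      exact (hA.mul hB).congr (Filter.Eventually.of_forall fun t => (mul_assoc _ _ _))
    · apply (ae_restrict_iff' measurableSet_Ioi).mpr
      filter_upwards with t ht
      intro u hu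
      rw [mem_Ioi] at ht
      have hure : w.re / 2 < u.re := by
        have := abs_lt.1 (lt_of_le_of_lt (Complex.abs_re_le_norm (u - w)) (mem_ball_iff_norm.1 hu))
        simp only [sub_re] at this
        linarith [this.1]
      have h1 : ‖(t:ℂ) ^ (z - 1) * (Complex.exp (-(u * t)) * (-(t:ℂ)))‖
          = t ^ (z.re - 1) * (Real.exp (-(u.re * t)) * t) := by
        rw [norm_mul, norm_mul,
          Complex.norm_cpow_eq_rpow_re_of_pos ht, Complex.norm_exp,
          norm_neg, Complex.norm_real, Real.norm_of_nonneg ht.le]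
        simp [Complex.sub_re]
      rw [h1]
      have h3 : t ^ (z.re - 1) * t = t ^ z.re := by
        rw [← Real.rpow_add_one ht.ne' (z.re - 1), sub_add_cancel]
      have h2 : t ^ (z.re - 1) * (Real.exp (-(u.re * t)) * t)
          = t ^ z.re * Real.exp (-(u.re * t)) := by
        rw [← h3]; ring
      rw [h2]
      have : Real.exp (-(u.re * t)) ≤ Real.exp (-(w.re / 2 * t)) := by
        apply Real.exp_le_exp.2
        rw [neg_le_neg_iff]
        exact mul_le_mul_of_nonneg_right hure.le ht.le
      exact mul_le_mul_of_nonneg_left this (Real.rpow_nonneg ht.le _)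
    · have := integrableOn_rpow_mul_exp_neg (s := z.re + 1) (by linarith) hε0
      simp only [add_sub_cancel_right] at this; exact this
    · apply (ae_restrict_iff' measurableSet_Ioi).mpr
      filter_upwards with t ht
      intro u hu
      have : HasDerivAt (fun v : ℂ => Complex.exp (-(v * t))) (Complex.exp (-(u * t)) * (-(t:ℂ))) u := by
        exact HasDerivAt.cexp ((hasDerivAt_mul_const (t:ℂ)).neg)
      simpa using this.const_mul ((t:ℂ) ^ (z - 1))
  have hGa : AnalyticOnNhd ℂ G U := by
    refine DifferentiableOn.analyticOnNhd
      (fun w hw => DifferentiableAt.differentiableWithinAt ?_) hUo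
    refine DifferentiableAt.mul_const ?_ _
    exact DifferentiableAt.cpow differentiableAt_id (differentiableAt_const (-z)) (Or.inl hw)
  have h1 : ∀ r : ℝ, 0 < r → F r = G r := by
    intro r hr
    have h2 := integral_cpow_mul_exp_neg_mul_Ioi hz hr
    have h3 : ((1 / r : ℝ) : ℂ) ^ z = (r : ℂ) ^ (-z) := by
      rw [Complex.ofReal_div, Complex.ofReal_one, one_div, inv_cpow, ← Complex.cpow_neg]
      rw [Complex.arg_ofReal_of_nonneg hr.le]
      exact Real.pi_ne_zero.symm
    simp only [hF, hG]
    rw [h2, ← h3]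
    norm_num
  have heq : EqOn F G U := by
    have hmem : (1 : ℂ) ∈ U := by simp [hU]
    refine hFa.eqOn_of_preconnected_of_frequently_eq hGa
      ((convex_halfSpace_re_gt 0).isPreconnected) hmem ?_
    have hseq : Tendsto (fun n : ℕ => ((1 + ((n:ℝ)+1)⁻¹ : ℝ) : ℂ)) atTop (𝓝[≠] 1) := by
      apply tendsto_nhdsWithin_of_tendsto_nhds_of_eventually_within
      · have : Tendsto (fun n : ℕ => (1 + ((n:ℝ)+1)⁻¹ : ℝ)) atTop (𝓝 1) := by
          have h := tendsto_one_div_add_atTop_nhds_zero_nat (𝕜 := ℝ)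
          simp only [one_div] at h
          simpa using (tendsto_const_nhds (x := (1:ℝ))).add h
        have h5 := (Complex.continuous_ofReal.tendsto 1).comp this
        simpa [Function.comp_def] using h5
      · filter_upwards with n
        simp only [Set.mem_compl_iff, Set.mem_singleton_iff]
        intro h
        have : (1 + ((n:ℝ)+1)⁻¹ : ℝ) = 1 := by exact_mod_cast h
        have hpos : (0:ℝ) < ((n:ℝ)+1)⁻¹ := by positivity
        linarith
    exact hseq.frequently (Frequently.of_forall fun n => h1 _ (by positivity))
  exact heq hcc

-- assume previous lemmas; restate as axioms for speed of iteration
lemma key_exp_eq (z c : ℂ) (y : ℝ) :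
    (Real.exp y) • ((↑(Real.exp y) : ℂ) ^ (z - 1) * Complex.exp (-(c * ↑(Real.exp y))))
      = Complex.exp (z * ↑y - c * ↑(Real.exp y)) := by
  have h1 : ((Real.exp y : ℝ) : ℂ) ^ (z - 1) = Complex.exp (↑y * (z - 1)) := by
    rw [Complex.ofReal_exp, Complex.cpow_def_of_ne_zero (Complex.exp_ne_zero _),
      Complex.log_exp (by simpa using Real.pi_pos) (by simp [Real.pi_pos.le])]
  rw [real_smul, h1, Complex.ofReal_exp, ← Complex.exp_add, ← Complex.exp_add]
  congr 1
  ring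

lemma integrable_exp_comb {z c : ℂ} (hz : 0 < z.re) (hc : 0 < c.re) :
    Integrable (fun y : ℝ => Complex.exp (z * ↑y - c * ↑(Real.exp y))) := by
  have h := (integrableOn_Ioi_iff_comp_exp
      (fun s : ℝ => (s:ℂ) ^ (z - 1) * Complex.exp (-(c * s)))).1
      (integrableOn_cpow_mul_exp hz hc)
  exact h.congr (Filter.Eventually.of_forall fun y => key_exp_eq z c y)

lemma integral_exp_comb {z c : ℂ} (hz : 0 < z.re) (hc : 0 < c.re) :
    ∫ y : ℝ, Complex.exp (z * ↑y - c * ↑(Real.exp y)) = c ^ (-z) * Complex.Gamma z := by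
  rw [← integral_cpow_mul_cexp_neg hz hc, integral_Ioi_comp_exp]
  exact integral_congr_ae (Filter.Eventually.of_forall fun y => (key_exp_eq z c y).symm)

lemma re_aux (b : ℝ) (w : ℝ) : (↑b - 2*↑π*Complex.I*↑w).re = b := by simp

lemma fourierIntegral_f {b : ℝ} (hb : 0 < b) {c : ℂ} (hc : 0 < c.re) (w : ℝ) :
    𝓕 (fun y : ℝ => Complex.exp (↑b * ↑y - c * ↑(Real.exp y))) w
      = c ^ (-(↑b - 2*↑π*Complex.I*↑w)) * Complex.Gamma (↑b - 2*↑π*Complex.I*↑w) := by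
  rw [Real.fourier_real_eq_integral_exp_smul]
  rw [← integral_exp_comb (z := ↑b - 2*↑π*Complex.I*↑w) (by rw [re_aux]; exact hb) hc]
  refine integral_congr_ae (Filter.Eventually.of_forall fun y => ?_)
  show Complex.exp _ • Complex.exp _ = _
  rw [smul_eq_mul, ← Complex.exp_add]
  congr 1
  push_cast
  ring

variable {b : ℝ} {c : ℂ}

lemma hasDerivAt_f (b : ℝ) (c : ℂ) (y : ℝ) :
    HasDerivAt (fun y : ℝ => Complex.exp (↑b * ↑y - c * ↑(Real.exp y)))
      ((↑b - c * ↑(Real.exp y)) * Complex.exp (↑b * ↑y - c * ↑(Real.exp y))) y := by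
  have t1 : HasDerivAt (fun y : ℝ => (↑y : ℂ)) 1 y := Complex.ofRealCLM.hasDerivAt
  have t2 : HasDerivAt (fun y : ℝ => (↑(Real.exp y) : ℂ)) (↑(Real.exp y)) y :=
    (Real.hasDerivAt_exp y).ofReal_comp
  have hφ : HasDerivAt (fun y : ℝ => ↑b * ↑y - c * ↑(Real.exp y))
      (↑b - c * ↑(Real.exp y)) y := by
    simpa using (by exact ((t1.const_mul (↑b : ℂ)).sub (t2.const_mul c)) :
      HasDerivAt (fun y : ℝ => ↑b * ↑y - c * ↑(Real.exp y)) (↑b * 1 - c * ↑(Real.exp y)) y)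
  simpa [mul_comm] using hφ.cexp

lemma f_mul_exp (b : ℝ) (c : ℂ) (y : ℝ) (k : ℕ) :
    (↑(Real.exp y) : ℂ) ^ k * Complex.exp (↑b * ↑y - c * ↑(Real.exp y))
      = Complex.exp ((↑b + k) * ↑y - c * ↑(Real.exp y)) := by
  rw [Complex.ofReal_exp, ← Complex.exp_nat_mul, ← Complex.exp_add]
  congr 1
  ring

lemma deriv_f_eq (b : ℝ) (c : ℂ) :
    deriv (fun y : ℝ => Complex.exp (↑b * ↑y - c * ↑(Real.exp y)))
      = fun y : ℝ => (↑b - c * ↑(Real.exp y)) * Complex.exp (↑b * ↑y - c * ↑(Real.exp y)) :=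
  funext fun y => (hasDerivAt_f b c y).deriv

lemma integrable_F1 (hb : 0 < b) (hc : 0 < c.re) :
    Integrable (fun y : ℝ =>
      (↑b - c * ↑(Real.exp y)) * Complex.exp (↑b * ↑y - c * ↑(Real.exp y))) := by
  have h0 : Integrable (fun y : ℝ => Complex.exp (↑b * ↑y - c * ↑(Real.exp y))) :=
    integrable_exp_comb (by simpa using hb) hc
  have h1 : Integrable (fun y : ℝ => Complex.exp ((↑b + 1) * ↑y - c * ↑(Real.exp y))) :=
    integrable_exp_comb (by simp; linarith) hc
  refine ((h0.const_mul (↑b : ℂ)).sub (h1.const_mul c)).congr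
    (Filter.Eventually.of_forall fun y => ?_)
  have e1 := f_mul_exp b c y 1
  simp only [pow_one, Nat.cast_one] at e1
  simp only [Pi.sub_apply]
  rw [← e1]
  ring

lemma hasDerivAt_F1 (b : ℝ) (c : ℂ) (y : ℝ) :
    HasDerivAt (fun y : ℝ =>
        (↑b - c * ↑(Real.exp y)) * Complex.exp (↑b * ↑y - c * ↑(Real.exp y)))
      (((↑b - c * ↑(Real.exp y)) ^ 2 - c * ↑(Real.exp y))
        * Complex.exp (↑b * ↑y - c * ↑(Real.exp y))) y := by
  have t2 : HasDerivAt (fun y : ℝ => (↑(Real.exp y) : ℂ)) (↑(Real.exp y)) y :=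
    (Real.hasDerivAt_exp y).ofReal_comp
  have t3 : HasDerivAt (fun y : ℝ => (↑b - c * ↑(Real.exp y) : ℂ))
      (-(c * ↑(Real.exp y))) y := by
    simpa using (by exact (hasDerivAt_const y (↑b : ℂ)).sub (t2.const_mul c) :
      HasDerivAt (fun y : ℝ => (↑b - c * ↑(Real.exp y) : ℂ)) (0 - c * ↑(Real.exp y)) y)
  have := t3.mul (hasDerivAt_f b c y)
  convert this using 1
  case e'_4 => rfl
  case e'_8 => rfl
  case e'_9 => ring

lemma deriv2_f_eq (b : ℝ) (c : ℂ) :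
    deriv (deriv (fun y : ℝ => Complex.exp (↑b * ↑y - c * ↑(Real.exp y))))
      = fun y : ℝ => ((↑b - c * ↑(Real.exp y)) ^ 2 - c * ↑(Real.exp y))
          * Complex.exp (↑b * ↑y - c * ↑(Real.exp y)) := by
  rw [deriv_f_eq]
  exact funext fun y => (hasDerivAt_F1 b c y).deriv

lemma integrable_F2 (hb : 0 < b) (hc : 0 < c.re) :
    Integrable (fun y : ℝ => ((↑b - c * ↑(Real.exp y)) ^ 2 - c * ↑(Real.exp y))
      * Complex.exp (↑b * ↑y - c * ↑(Real.exp y))) := by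
  have h0 : Integrable (fun y : ℝ => Complex.exp (↑b * ↑y - c * ↑(Real.exp y))) :=
    integrable_exp_comb (by simpa using hb) hc
  have h1 : Integrable (fun y : ℝ => Complex.exp ((↑b + 1) * ↑y - c * ↑(Real.exp y))) :=
    integrable_exp_comb (by simp; linarith) hc
  have h2 : Integrable (fun y : ℝ => Complex.exp ((↑b + 2) * ↑y - c * ↑(Real.exp y))) :=
    integrable_exp_comb (by simp; linarith) hc
  refine (((h0.const_mul ((↑b : ℂ) ^ 2)).sub
    (h1.const_mul ((2 * ↑b + 1) * c))).add (h2.const_mul (c ^ 2))).congr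
    (Filter.Eventually.of_forall fun y => ?_)
  have e1 := f_mul_exp b c y 1
  have e2 := f_mul_exp b c y 2
  simp only [pow_one, Nat.cast_one, Nat.cast_ofNat] at e1 e2
  simp only [Pi.sub_apply, Pi.add_apply]
  rw [← e1, ← e2]
  ring

lemma integrable_fourier_f (hb : 0 < b) (hc : 0 < c.re) :
    Integrable (𝓕 (fun y : ℝ => Complex.exp (↑b * ↑y - c * ↑(Real.exp y)))) := by
  set f : ℝ → ℂ := fun y : ℝ => Complex.exp (↑b * ↑y - c * ↑(Real.exp y)) with hfdef
  have h0 : Integrable f := integrable_exp_comb (by simpa using hb) hc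
  have hdiff : Differentiable ℝ f := fun y => (hasDerivAt_f b c y).differentiableAt
  have h1 : Integrable (deriv f) := by rw [deriv_f_eq]; exact integrable_F1 hb hc
  have hdiff2 : Differentiable ℝ (deriv f) := by
    rw [deriv_f_eq]
    exact fun y => (hasDerivAt_F1 b c y).differentiableAt
  have h2 : Integrable (deriv (deriv f)) := by rw [deriv2_f_eq]; exact integrable_F2 hb hc
  have key1 : 𝓕 (deriv f) = fun w : ℝ => (2 * ↑π * Complex.I * ↑w) • 𝓕 f w :=
    Real.fourier_deriv h0 hdiff h1
  have key2 : 𝓕 (deriv (deriv f)) = fun w : ℝ => (2 * ↑π * Complex.I * ↑w) • 𝓕 (deriv f) w :=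
    Real.fourier_deriv h1 hdiff2 h2
  set M : ℝ := (∫ y, ‖f y‖) + (∫ y, ‖deriv (deriv f) y‖) / (4 * π ^ 2) with hM
  have hbound : ∀ w : ℝ, ‖𝓕 f w‖ ≤ M * (1 + w ^ 2)⁻¹ := by
    intro w
    have hb1 : ‖𝓕 f w‖ ≤ ∫ y, ‖f y‖ :=
      VectorFourier.norm_fourierIntegral_le_integral_norm _ _ _ _ _
    have hb2 : ‖𝓕 (deriv (deriv f)) w‖ ≤ ∫ y, ‖deriv (deriv f) y‖ :=
      VectorFourier.norm_fourierIntegral_le_integral_norm _ _ _ _ _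
    have hn : ‖(2 * ↑π * Complex.I * (↑w:ℂ))‖ = 2 * π * |w| := by
      simp [map_mul, Complex.norm_real, Complex.norm_I,
        abs_of_pos Real.pi_pos]
    have heq : ‖𝓕 (deriv (deriv f)) w‖ = (4 * π ^ 2 * w ^ 2) * ‖𝓕 f w‖ := by
      simp only [key2, key1]
      rw [smul_smul, norm_smul, norm_mul, hn, ← _root_.sq_abs w]
      ring
    have hw2 : w ^ 2 * ‖𝓕 f w‖ ≤ (∫ y, ‖deriv (deriv f) y‖) / (4 * π ^ 2) := by
      rw [heq] at hb2
      rw [le_div_iff₀ (by positivity : (0:ℝ) < 4 * π ^ 2)]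
      calc w ^ 2 * ‖𝓕 f w‖ * (4 * π ^ 2) = 4 * π ^ 2 * w ^ 2 * ‖𝓕 f w‖ := by ring
        _ ≤ _ := hb2
    have : (1 + w ^ 2) * ‖𝓕 f w‖ ≤ M := by
      rw [hM, add_mul, one_mul]
      exact add_le_add hb1 hw2
    calc ‖𝓕 f w‖ = (1 + w ^ 2)⁻¹ * ((1 + w ^ 2) * ‖𝓕 f w‖) := by field_simp
      _ ≤ (1 + w ^ 2)⁻¹ * M := mul_le_mul_of_nonneg_left this (by positivity)
      _ = M * (1 + w ^ 2)⁻¹ := by ring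
  have hcont : Continuous (𝓕 f) :=
    VectorFourier.fourierIntegral_continuous Real.continuous_fourierChar
      (by simpa only [innerₗ_apply_apply] using continuous_inner) h0
  refine (integrable_inv_one_add_sq.const_mul M).mono' hcont.aestronglyMeasurable
    (Filter.Eventually.of_forall fun w => hbound w)

lemma fourierIntegral_conj (h : ℝ → ℂ) (y : ℝ) :
    𝓕 (fun w => conj (h w)) y = conj (𝓕 h (-y)) := by
  rw [Real.fourier_real_eq_integral_exp_smul,
    Real.fourier_real_eq_integral_exp_smul, ← integral_conj]
  refine integral_congr_ae (Filter.Eventually.of_forall fun v => ?_)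
  simp only [smul_eq_mul, map_mul, ← Complex.exp_conj]
  congr 2
  simp only [map_mul, Complex.conj_I, Complex.conj_ofReal]
  push_cast
  ring

lemma integrable_conj' {h : ℝ → ℂ} (hh : Integrable h) :
    Integrable (fun w => conj (h w)) := by
  have := (Complex.conjCLE.toContinuousLinearMap).integrable_comp hh
  exact this

lemma parseval {f : ℝ → ℂ} (hcont : Continuous f) (hf : Integrable f)
    (hFf : Integrable (𝓕 f)) :
    ∫ w : ℝ, (Complex.normSq (𝓕 f w) : ℝ) = ∫ y : ℝ, (Complex.normSq (f y) : ℝ) := by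
  set g : ℝ → ℂ := fun w => conj (𝓕 f w) with hg
  have hgint : Integrable g := integrable_conj' hFf
  have hginv : ∀ y, 𝓕 g y = conj (f y) := by
    intro y
    rw [hg, fourierIntegral_conj (𝓕 f) y, ← Real.fourierInv_eq_fourier_neg,
      hf.fourierInv_fourier_eq hFf hcont.continuousAt]
  have hflip : (innerₗ ℝ).flip = innerₗ ℝ :=
    LinearMap.ext fun x => LinearMap.ext fun y => real_inner_comm x y
  have hmul := VectorFourier.integral_fourierIntegral_smul_eq_flip
    (e := Real.fourierChar) (L := innerₗ ℝ) (μ := volume) (ν := volume)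
    Real.continuous_fourierChar (by simpa only [innerₗ_apply_apply] using continuous_inner) hf hgint
  rw [hflip] at hmul
  have key : ∫ w, 𝓕 f w * g w = ∫ y, f y * conj (f y) := by
    have h1 : ∫ w, 𝓕 f w * g w = ∫ x, f x * 𝓕 g x := by
      simp only [smul_eq_mul] at hmul; exact hmul
    rw [h1]
    refine integral_congr_ae (Filter.Eventually.of_forall fun y => ?_)
    show f y * 𝓕 g y = f y * conj (f y)
    rw [hginv y]
  set A : ℝ := ∫ w, Complex.normSq (𝓕 f w) with hA
  set B : ℝ := ∫ y, Complex.normSq (f y) with hB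
  have lhs : ∫ w, 𝓕 f w * g w = (A : ℂ) := by
    have h2 : (∫ w, ((Complex.normSq (𝓕 f w) : ℝ) : ℂ)) = (A : ℂ) := integral_ofReal
    rw [← h2]
    exact integral_congr_ae (Filter.Eventually.of_forall fun w => (Complex.mul_conj _))
  have rhs : ∫ y, f y * conj (f y) = (B : ℂ) := by
    have h2 : (∫ y, ((Complex.normSq (f y) : ℝ) : ℂ)) = (B : ℂ) := integral_ofReal
    rw [← h2]
    exact integral_congr_ae (Filter.Eventually.of_forall fun y => (Complex.mul_conj _))
  have := (lhs.symm.trans (key.trans rhs))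
  exact_mod_cast this

lemma normSq_exp (z : ℂ) : Complex.normSq (Complex.exp z) = Real.exp (2 * z.re) := by
  rw [← Complex.sq_norm, Complex.norm_exp, sq, ← Real.exp_add]
  ring_nf

lemma master {b θ : ℝ} (hb : 0 < b) (hθ : |θ| < π/2) :
    ∫ w : ℝ, Complex.normSq (Complex.Gamma (↑b - 2*↑π*Complex.I*↑w)) * Real.exp (-(4*π*θ)*w)
      = (2 * Real.cos θ) ^ (-(2*b)) * Real.Gamma (2*b) := by
  obtain ⟨hθ1, hθ2⟩ := abs_lt.1 hθ
  have hcos : 0 < Real.cos θ := Real.cos_pos_of_mem_Ioo ⟨hθ1, hθ2⟩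
  set c : ℂ := Complex.exp (↑θ * Complex.I) with hcdef
  have hcre : c.re = Real.cos θ := by
    rw [hcdef, Complex.exp_re]
    simp
  have hc : 0 < c.re := by rw [hcre]; exact hcos
  have hlog : Complex.log c = ↑θ * Complex.I := by
    rw [hcdef]
    refine Complex.log_exp ?_ ?_ <;> simp <;> linarith [Real.pi_pos, Real.pi_gt_three]
  have hcne : c ≠ 0 := Complex.exp_ne_zero _
  set f : ℝ → ℂ := fun y => Complex.exp (↑b * ↑y - c * ↑(Real.exp y)) with hfdef
  have hbre : (0:ℝ) < ((b:ℂ)).re := by simpa using hb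
  have hf : Integrable f := integrable_exp_comb hbre hc
  have hcont : Continuous f := by
    apply Complex.continuous_exp.comp
    exact ((continuous_const.mul Complex.continuous_ofReal).sub
      (continuous_const.mul (Complex.continuous_ofReal.comp Real.continuous_exp)))
  have hFf : Integrable (𝓕 f) := integrable_fourier_f hb hc
  have hp := parseval hcont hf hFf
  -- LHS rewrite
  have hL : ∀ w : ℝ, Complex.normSq (𝓕 f w)
      = Complex.normSq (Complex.Gamma (↑b - 2*↑π*Complex.I*↑w)) * Real.exp (-(4*π*θ)*w) := by
    intro w
    rw [hfdef]
    rw [fourierIntegral_f hb hc w, map_mul]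
    have h1 : c ^ (-(↑b - 2*↑π*Complex.I*↑w)) = Complex.exp (↑θ * Complex.I * (-(↑b - 2*↑π*Complex.I*↑w))) := by
      rw [Complex.cpow_def_of_ne_zero hcne, hlog]
    rw [h1, normSq_exp]
    have h2 : (↑θ * Complex.I * (-(↑b - 2*↑π*Complex.I*↑w))).re = -(2*π*θ*w) := by
      simp [Complex.mul_re, Complex.mul_im]
      ring
    rw [h2]
    ring_nf
  -- RHS rewrite
  have hR : ∀ y : ℝ, Complex.normSq (f y) = Real.exp (2*b*y - 2*Real.cos θ * Real.exp y) := by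
    intro y
    rw [hfdef, normSq_exp]
    congr 1
    simp only [Complex.sub_re, Complex.mul_re, Complex.ofReal_re, Complex.ofReal_im,
      Complex.mul_im, hcre, mul_zero, zero_mul, sub_zero]
    ring
  have hval : ∫ y : ℝ, Real.exp (2*b*y - 2*Real.cos θ * Real.exp y)
      = (2 * Real.cos θ) ^ (-(2*b)) * Real.Gamma (2*b) := by
    have h2b : (0:ℝ) < ((2*b:ℝ):ℂ).re := by rw [Complex.ofReal_re]; linarith
    have h2c : (0:ℝ) < ((2*Real.cos θ:ℝ):ℂ).re := by rw [Complex.ofReal_re]; linarith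
    have := integral_exp_comb (z := ((2*b:ℝ):ℂ)) (c := ((2*Real.cos θ:ℝ):ℂ)) h2b h2c
    have hcast : ∀ y : ℝ, Complex.exp (((2*b:ℝ):ℂ) * ↑y - ((2*Real.cos θ:ℝ):ℂ) * ↑(Real.exp y))
        = ((Real.exp (2*b*y - 2*Real.cos θ * Real.exp y) : ℝ) : ℂ) := by
      intro y
      rw [Complex.ofReal_exp]
      push_cast
      ring_nf
    rw [integral_congr_ae (Filter.Eventually.of_forall fun y => hcast y)] at this
    have hint : (∫ y : ℝ, ((Real.exp (2*b*y - 2*Real.cos θ * Real.exp y) : ℝ) : ℂ))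
        = ((∫ y : ℝ, Real.exp (2*b*y - 2*Real.cos θ * Real.exp y) : ℝ) : ℂ) := integral_ofReal
    rw [hint] at this
    have hrhs : (((2 * Real.cos θ) ^ (-(2*b)) * Real.Gamma (2*b) : ℝ) : ℂ)
        = (((2*Real.cos θ:ℝ):ℂ)) ^ (-((2*b:ℝ):ℂ)) * Complex.Gamma ((2*b:ℝ):ℂ) := by
      rw [Complex.ofReal_mul, Complex.ofReal_cpow (by positivity : (0:ℝ) ≤ 2 * Real.cos θ),
        ← Complex.Gamma_ofReal]
      norm_cast
    rw [← hrhs] at this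
    exact_mod_cast this
  calc ∫ w : ℝ, Complex.normSq (Complex.Gamma (↑b - 2*↑π*Complex.I*↑w)) * Real.exp (-(4*π*θ)*w)
      = ∫ w : ℝ, (Complex.normSq (𝓕 f w) : ℝ) :=
        integral_congr_ae (Filter.Eventually.of_forall fun w => (hL w).symm)
    _ = ∫ y : ℝ, (Complex.normSq (f y) : ℝ) := hp
    _ = ∫ y : ℝ, Real.exp (2*b*y - 2*Real.cos θ * Real.exp y) :=
        integral_congr_ae (Filter.Eventually.of_forall fun y => hR y)
    _ = (2 * Real.cos θ) ^ (-(2*b)) * Real.Gamma (2*b) := hval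

end TConstAux

open TConstAux in
/-- `T_{λ,a}` preserves constants. -/
theorem T_const (lam a : ℝ) (hlam : 0 < lam) (ha : 0 < a) (x : ℝ) :
    ∫ ν : ℝ, κ a lam x ν = 1 := by
  have hπ := Real.pi_pos
  set θ : ℝ := Real.arctan (x / a) with hθdef
  have hθ : |θ| < π/2 := by
    rw [abs_lt]
    exact ⟨Real.neg_pi_div_two_lt_arctan _, Real.arctan_lt_pi_div_two _⟩
  have hb : 0 < lam / 2 := by linarith
  have hmaster := master hb hθ
  have h2 : 2 * (lam / 2) = lam := by ring
  rw [h2] at hmaster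
  set k : ℝ := -(lam / (4 * π * a)) with hk
  have hkne : k ≠ 0 := by
    rw [hk, neg_ne_zero]
    positivity
  set C : ℝ := (2 ^ (lam - 2) * lam * a ^ (lam - 1)) /
      (π * Real.Gamma lam * (a ^ 2 + x ^ 2) ^ (lam / 2)) with hC
  set G : ℝ → ℝ := fun w =>
    Complex.normSq (Complex.Gamma (↑(lam/2) - 2*↑π*Complex.I*↑w)) * Real.exp (-(4*π*θ)*w)
    with hG
  have hκ : ∀ ν : ℝ, κ a lam x ν = C * G (k * ν) := by
    intro ν
    have harg : ((lam : ℂ) * a + Complex.I * (lam * ν)) / (2 * a)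
        = ↑(lam/2) - 2*↑π*Complex.I*↑(k * ν) := by
      have haC : (a:ℂ) ≠ 0 := Complex.ofReal_ne_zero.mpr ha.ne'
      have hπC : (π:ℂ) ≠ 0 := Complex.ofReal_ne_zero.mpr Real.pi_ne_zero
      rw [hk]
      push_cast
      field_simp
      ring
    have hexp : lam * ν / a * θ = -(4*π*θ) * (k * ν) := by
      rw [hk]
      field_simp
    rw [κ, harg, hexp, hG]
    simp only [Complex.sq_norm]
    ring
  calc ∫ ν : ℝ, κ a lam x ν = ∫ ν : ℝ, C * G (k * ν) := by
        exact integral_congr_ae (Filter.Eventually.of_forall fun ν => hκ ν)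
    _ = C * ∫ ν : ℝ, G (k * ν) := integral_const_mul _ _
    _ = C * (|k⁻¹| • ∫ w, G w) := by rw [MeasureTheory.Measure.integral_comp_mul_left G k]
    _ = C * (|k⁻¹| * ((2 * Real.cos θ) ^ (-lam) * Real.Gamma lam)) := by
        rw [smul_eq_mul, hmaster]
    _ = 1 := ?_
  -- numerical identity
  have hS : (0:ℝ) < Real.sqrt (a^2+x^2) := Real.sqrt_pos.2 (by positivity)
  have hcos : Real.cos θ = a / Real.sqrt (a^2+x^2) := by
    rw [hθdef, Real.cos_arctan]
    have h1 : 1 + (x/a)^2 = (a^2+x^2)/a^2 := by field_simp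
    rw [h1, Real.sqrt_div (by positivity) _, Real.sqrt_sq ha.le, one_div_div]
  have hksabs : |k⁻¹| = 4*π*a/lam := by
    rw [hk, abs_inv, abs_neg, abs_of_pos (by positivity), inv_div]
  have hsqrtpow : Real.sqrt (a^2+x^2) ^ lam = (a^2+x^2) ^ (lam/2) := by
    rw [Real.sqrt_eq_rpow, ← Real.rpow_mul (by positivity)]
    congr 1
    ring
  have hpow : (2 * Real.cos θ) ^ (-lam) = (a^2+x^2) ^ (lam/2) / ((2*a) ^ lam) := by
    rw [hcos, show 2 * (a / Real.sqrt (a^2+x^2)) = (2*a) / Real.sqrt (a^2+x^2) from by ring]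
    rw [Real.rpow_neg (by positivity), Real.div_rpow (by positivity) (Real.sqrt_nonneg _),
      inv_div, hsqrtpow]
  have hΓpos : 0 < Real.Gamma lam := Real.Gamma_pos_of_pos hlam
  have hXpos : 0 < (a^2+x^2) ^ (lam/2) := Real.rpow_pos_of_pos (by positivity) _
  have h2l : (0:ℝ) < 2 ^ lam := Real.rpow_pos_of_pos two_pos _
  have hal : (0:ℝ) < a ^ lam := Real.rpow_pos_of_pos ha _
  have h22 : (2:ℝ) ^ (2:ℝ) = 4 := by
    norm_num
  have he1 : (2:ℝ) ^ (lam - 2) = 2 ^ lam / 4 := by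
    rw [Real.rpow_sub two_pos, h22]
  have he2 : a ^ (lam - 1) = a ^ lam / a := by
    rw [Real.rpow_sub ha, Real.rpow_one]
  have he3 : (2*a) ^ lam = 2 ^ lam * a ^ lam := Real.mul_rpow (by norm_num) ha.le
  rw [hksabs, hpow, hC, he1, he2, he3]
  field_simp
end

section
/- For every integer p ≥ 1 and all real λ > 0, a > 0, the central moments of T_{λ,a} satisfy the recurrence relation: the function x ↦ μ^T_{λ,p}(x) is differentiable on ℝ and λ μ^T_{λ,p+1}(x)/(a² + x²) = p μ^T_{λ,p−1}(x) + (d/dx) μ^T_{λ,p}(x) for every x ∈ ℝ. -/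
set_option maxHeartbeats 1000000

open MeasureTheory Real Filter Topology

/-- The central moments `μ^T_{λ,p}(x)`. -/
noncomputable def centralMoment (a lam : ℝ) (p : ℕ) (x : ℝ) : ℝ :=
  ∫ ν : ℝ, κ a lam x ν * (ν - x) ^ p

/-- Auxiliary antiderivative of `y ↦ log (1 + t²/y²)`. -/
noncomputable def Faux (t y : ℝ) : ℝ :=
  y * Real.log (1 + t ^ 2 / y ^ 2) + 2 * t * Real.arctan (y / t)

lemma hasDerivAt_Faux (t : ℝ) (ht : t ≠ 0) {y : ℝ} (hy : 0 < y) :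
    HasDerivAt (Faux t) (Real.log (1 + t ^ 2 / y ^ 2)) y := by
  have hy2 : (y:ℝ) ^ 2 ≠ 0 := pow_ne_zero 2 hy.ne'
  have hV : 0 < 1 + t ^ 2 / y ^ 2 := by positivity
  have h1 : HasDerivAt (fun y : ℝ => 1 + t ^ 2 / y ^ 2)
      ((0 * y ^ 2 - t ^ 2 * (2 * y ^ 1)) / (y ^ 2) ^ 2) y :=
    ((hasDerivAt_const y (t ^ 2)).div (hasDerivAt_pow 2 y) hy2).const_add 1
  have h2 := h1.log hV.ne'
  have h3 := (hasDerivAt_id y).mul h2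
  have h4 : HasDerivAt (fun y : ℝ => 2 * t * Real.arctan (y / t))
      (2 * t * (1 / (1 + (y / t) ^ 2) * (1 / t))) y := by
    exact (((Real.hasDerivAt_arctan (y / t)).comp y
      ((hasDerivAt_id y).div_const t))).const_mul (2 * t)
  have := h3.add h4
  refine this.congr_deriv (Eq.symm ?_)
  have ht2 : 0 < t ^ 2 := by positivity
  have h5 : 1 + (y / t) ^ 2 ≠ 0 := by positivity
  field_simp
  simp only [id]
  ring

lemma Faux_step (t : ℝ) (ht : t ≠ 0) {y : ℝ} (hy : 0 < y) :
    Faux t (y + 1) - Faux t y ≤ Real.log (1 + t ^ 2 / y ^ 2) := by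
  have hlt : y < y + 1 := by linarith
  obtain ⟨c, hc, hceq⟩ := exists_hasDerivAt_eq_slope (Faux t)
    (fun y => Real.log (1 + t ^ 2 / y ^ 2)) hlt
    (fun z hz => (hasDerivAt_Faux t ht (lt_of_lt_of_le hy hz.1)).continuousAt.continuousWithinAt)
    (fun z hz => hasDerivAt_Faux t ht (hy.trans hz.1))
  have heq : (Faux t (y+1) - Faux t y) / (y + 1 - y) = Faux t (y+1) - Faux t y := by simp
  rw [heq] at hceq
  rw [← hceq]
  have hcy : 0 < c := hy.trans hc.1
  have h2 : y ^ 2 ≤ c ^ 2 := pow_le_pow_left₀ hy.le hc.1.le 2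
  gcongr

lemma Faux_sum (σ t : ℝ) (hσ : 0 < σ) (ht : t ≠ 0) (n : ℕ) :
    Faux t (σ + (n + 1)) - Faux t σ ≤
      ∑ j ∈ Finset.range (n + 1), Real.log (1 + t ^ 2 / (σ + j) ^ 2) := by
  have h := Finset.sum_range_sub (fun k : ℕ => Faux t (σ + k)) (n + 1)
  push_cast at h
  norm_num at h
  rw [← h, ← Finset.sum_sub_distrib]
  apply Finset.sum_le_sum
  intro j _
  have hj : (0:ℝ) < σ + j := by positivity
  have := Faux_step t ht hj
  calc Faux t (σ + (j + 1)) - Faux t (σ + j)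
      = Faux t ((σ + j) + 1) - Faux t (σ + j) := by ring_nf
    _ ≤ _ := this

lemma Faux_tendsto (σ t : ℝ) (ht : 0 < t) :
    Tendsto (fun n : ℕ => Faux t (σ + (n + 1))) atTop (𝓝 (Real.pi * t)) := by
  have hb : Tendsto (fun n : ℕ => σ + ((n : ℝ) + 1)) atTop atTop := by
    apply tendsto_atTop_add_const_left
    exact tendsto_atTop_add_const_right _ _ tendsto_natCast_atTop_atTop
  have h1 : Tendsto (fun y : ℝ => y * Real.log (1 + t ^ 2 / y ^ 2)) atTop (𝓝 0) := by
    apply tendsto_of_tendsto_of_tendsto_of_le_of_le' (g := fun _ : ℝ => (0:ℝ))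
      (h := fun y : ℝ => t ^ 2 / y) tendsto_const_nhds
      (tendsto_const_nhds.div_atTop tendsto_id)
    · filter_upwards [eventually_gt_atTop (0:ℝ)] with y hy
      have : (0:ℝ) ≤ Real.log (1 + t ^ 2 / y ^ 2) := by
        apply Real.log_nonneg; nlinarith [sq_nonneg t, sq_nonneg y, div_nonneg (sq_nonneg t) (sq_nonneg y)]
      positivity
    · filter_upwards [eventually_gt_atTop (0:ℝ)] with y hy
      have hlog : Real.log (1 + t ^ 2 / y ^ 2) ≤ t ^ 2 / y ^ 2 := by
        have := Real.log_le_sub_one_of_pos (by positivity : (0:ℝ) < 1 + t ^ 2 / y ^ 2)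
        linarith
      calc y * Real.log (1 + t ^ 2 / y ^ 2) ≤ y * (t ^ 2 / y ^ 2) := by
            exact mul_le_mul_of_nonneg_left hlog hy.le
        _ = t ^ 2 / y := by field_simp
  have h2 : Tendsto (fun y : ℝ => 2 * t * Real.arctan (y / t)) atTop
      (𝓝 (2 * t * (Real.pi / 2))) := by
    apply Tendsto.const_mul
    exact (tendsto_arctan_atTop.mono_right nhdsWithin_le_nhds).comp
      (tendsto_id.atTop_div_const ht)
  have h3 := (h1.add h2).comp hb
  have : (0:ℝ) + 2 * t * (Real.pi / 2) = Real.pi * t := by ring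
  rw [this] at h3
  exact h3

lemma factor_le (t : ℝ) (ht : t ≠ 0) {y : ℝ} (hy : 0 < y) :
    y / Real.sqrt (y ^ 2 + t ^ 2) ≤ Real.exp (-(Faux t (y + 1) - Faux t y) / 2) := by
  have hs : (0:ℝ) < y ^ 2 + t ^ 2 := by positivity
  have hV : (0:ℝ) < 1 + t ^ 2 / y ^ 2 := by positivity
  have key : y / Real.sqrt (y ^ 2 + t ^ 2) =
      Real.exp (-(Real.log (1 + t ^ 2 / y ^ 2)) / 2) := by
    have h1 : (y / Real.sqrt (y ^ 2 + t ^ 2)) ^ 2 =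
        (Real.exp (-(Real.log (1 + t ^ 2 / y ^ 2)) / 2)) ^ 2 := by
      have h2 : (Real.exp (-(Real.log (1 + t ^ 2 / y ^ 2)) / 2)) ^ 2 =
          Real.exp (-(Real.log (1 + t ^ 2 / y ^ 2))) := by
        rw [← Real.exp_nat_mul]
        congr 1
        push_cast
        ring
      rw [div_pow, Real.sq_sqrt hs.le, h2, Real.exp_neg, Real.exp_log hV]
      rw [inv_eq_one_div, eq_div_iff (by positivity : (1 + t ^ 2 / y ^ 2) ≠ 0)]
      field_simp
    have hl : 0 ≤ y / Real.sqrt (y ^ 2 + t ^ 2) := by positivity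
    have hr : 0 ≤ Real.exp (-(Real.log (1 + t ^ 2 / y ^ 2)) / 2) := (Real.exp_pos _).le
    rw [← Real.sqrt_sq hl, ← Real.sqrt_sq hr, h1]
  rw [key]
  apply Real.exp_le_exp.mpr
  have := Faux_step t ht hy
  linarith

lemma prod_factor_le (σ t : ℝ) (hσ : 0 < σ) (ht : t ≠ 0) (n : ℕ) :
    ∏ j ∈ Finset.range (n + 1), ((σ + j) / Real.sqrt ((σ + j) ^ 2 + t ^ 2)) ≤
      Real.exp (-(Faux t (σ + (n + 1)) - Faux t σ) / 2) := by
  have h1 : ∀ j ∈ Finset.range (n + 1), ((σ + (j:ℝ)) / Real.sqrt ((σ + j) ^ 2 + t ^ 2)) ≤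
      Real.exp (-(Faux t (σ + j + 1) - Faux t (σ + j)) / 2) := by
    intro j _
    exact factor_le t ht (by positivity)
  have h2 : ∀ j ∈ Finset.range (n + 1),
      (0:ℝ) ≤ (σ + (j:ℝ)) / Real.sqrt ((σ + j) ^ 2 + t ^ 2) := by
    intro j _; positivity
  calc ∏ j ∈ Finset.range (n + 1), ((σ + (j:ℝ)) / Real.sqrt ((σ + j) ^ 2 + t ^ 2))
      ≤ ∏ j ∈ Finset.range (n + 1), Real.exp (-(Faux t (σ + j + 1) - Faux t (σ + j)) / 2) :=
        Finset.prod_le_prod h2 h1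
    _ = Real.exp (∑ j ∈ Finset.range (n + 1), (-(Faux t (σ + j + 1) - Faux t (σ + j)) / 2)) :=
        (Real.exp_sum _ _).symm
    _ = Real.exp (-(Faux t (σ + (n + 1)) - Faux t σ) / 2) := by
        congr 1
        have h := Finset.sum_range_sub (fun k : ℕ => Faux t (σ + k)) (n + 1)
        push_cast at h
        norm_num at h
        have : ∑ j ∈ Finset.range (n + 1), (-(Faux t (σ + j + 1) - Faux t (σ + j)) / 2)
            = -(∑ j ∈ Finset.range (n + 1), (Faux t (σ + (j + 1)) - Faux t (σ + j))) / 2 := by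
          rw [← Finset.sum_neg_distrib, ← Finset.sum_div]
          congr 1
          apply Finset.sum_congr rfl
          intro j _
          ring_nf
        rw [this, Finset.sum_sub_distrib, h]

lemma gamma_abs_le_of_pos (σ t : ℝ) (hσ : 0 < σ) (ht : 0 < t) :
    ‖Complex.Gamma ((σ:ℂ) + t * Complex.I)‖ ≤
      Real.Gamma σ * Real.exp (-(Real.pi * t - Faux t σ) / 2) := by
  set z : ℂ := (σ:ℂ) + t * Complex.I with hz
  have hΓσ : 0 < Real.Gamma σ := Real.Gamma_pos_of_pos hσ
  have hratio : Tendsto (fun n => ‖Complex.GammaSeq z n‖ / Real.GammaSeq σ n) atTop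
      (𝓝 (‖Complex.Gamma z‖ / Real.Gamma σ)) :=
    ((continuous_norm.tendsto _).comp (Complex.GammaSeq_tendsto_Gamma z)).div
      (Real.GammaSeq_tendsto_Gamma σ) hΓσ.ne'
  have hU : Tendsto (fun n : ℕ => Real.exp (-(Faux t (σ + (n + 1)) - Faux t σ) / 2)) atTop
      (𝓝 (Real.exp (-(Real.pi * t - Faux t σ) / 2))) := by
    apply (Real.continuous_exp.tendsto _).comp
    exact (((Faux_tendsto σ t ht).sub_const (Faux t σ)).neg.div_const 2)
  have hle : ∀ᶠ n : ℕ in atTop, ‖Complex.GammaSeq z n‖ / Real.GammaSeq σ n ≤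
      Real.exp (-(Faux t (σ + (n + 1)) - Faux t σ) / 2) := by
    filter_upwards [eventually_ge_atTop 1] with n hn
    have hn0 : (0:ℝ) < (n:ℝ) := by exact_mod_cast hn
    have habsz : ∀ j : ℕ, ‖z + j‖ = Real.sqrt ((σ + j) ^ 2 + t ^ 2) := by
      intro j
      have : z + (j:ℂ) = ((σ + j : ℝ) : ℂ) + (t:ℝ) * Complex.I := by
        rw [hz]; push_cast; ring
      rw [this, Complex.norm_add_mul_I]
    have e1 : ‖Complex.GammaSeq z n‖ =
        (n:ℝ) ^ σ * (Nat.factorial n : ℝ) / ∏ j ∈ Finset.range (n + 1), Real.sqrt ((σ + j) ^ 2 + t ^ 2) := by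
      rw [Complex.GammaSeq, norm_div, norm_mul, norm_prod]
      congr 1
      · congr 1
        · have : ((n:ℂ) : ℂ) = (((n:ℝ)):ℂ) := by norm_cast
          rw [this, Complex.norm_cpow_eq_rpow_re_of_pos hn0]
          congr 1
          simp [hz]
        · simp
      · exact Finset.prod_congr rfl fun j _ => habsz j
    have e2 : Real.GammaSeq σ n = (n:ℝ) ^ σ * (Nat.factorial n : ℝ) / ∏ j ∈ Finset.range (n + 1), (σ + j) :=
      rfl
    have hA : (0:ℝ) < (n:ℝ) ^ σ * (Nat.factorial n : ℝ) := by
      apply mul_pos (Real.rpow_pos_of_pos hn0 σ)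
      exact_mod_cast Nat.factorial_pos n
    have hP1 : (0:ℝ) < ∏ j ∈ Finset.range (n + 1), Real.sqrt ((σ + j) ^ 2 + t ^ 2) := by
      apply Finset.prod_pos; intro j _; apply Real.sqrt_pos.mpr; positivity
    have hP2 : (0:ℝ) < ∏ j ∈ Finset.range (n + 1), (σ + (j:ℝ)) := by
      apply Finset.prod_pos; intro j _; positivity
    have heq : ‖Complex.GammaSeq z n‖ / Real.GammaSeq σ n =
        ∏ j ∈ Finset.range (n + 1), ((σ + j) / Real.sqrt ((σ + j) ^ 2 + t ^ 2)) := by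
      rw [e1, e2, Finset.prod_div_distrib]
      field_simp
    rw [heq]
    exact prod_factor_le σ t hσ ht.ne' n
  have hfin := le_of_tendsto_of_tendsto hratio hU hle
  calc ‖Complex.Gamma z‖
      = ‖Complex.Gamma z‖ / Real.Gamma σ * Real.Gamma σ := by field_simp
    _
      ≤ Real.exp (-(Real.pi * t - Faux t σ) / 2) * Real.Gamma σ :=
        mul_le_mul_of_nonneg_right hfin hΓσ.le
    _ = _ := mul_comm _ _

lemma arctan_le_self {x : ℝ} (hx : 0 ≤ x) : Real.arctan x ≤ x := by
  rcases eq_or_lt_of_le hx with h | h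
  · simp [← h]
  · have hy : 0 < Real.arctan x := by
      rw [← Real.arctan_zero]
      exact Real.arctan_strictMono h
    have := Real.lt_tan hy (Real.arctan_lt_pi_div_two x)
    rw [Real.tan_arctan] at this
    linarith

lemma log_one_add_le (ε : ℝ) (hε : 0 < ε) {u : ℝ} (hu : 0 ≤ u) :
    Real.log (1 + u) ≤ Real.log (1 + 1/ε) + ε * u := by
  have h1 : (0:ℝ) < 1 + 1/ε := by positivity
  have h2 : (0:ℝ) < 1 + u := by linarith
  have h3 : Real.log (1 + u) - Real.log (1 + 1/ε) = Real.log ((1 + u)/(1 + 1/ε)) := by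
    rw [Real.log_div h2.ne' h1.ne']
  have h4 := Real.log_le_sub_one_of_pos (by positivity : (0:ℝ) < (1 + u)/(1 + 1/ε))
  have h5 : (1 + u)/(1 + 1/ε) - 1 ≤ ε * u := by
    rw [div_sub_one h1.ne', div_le_iff₀ h1]
    have he : (1 + u - (1 + 1/ε)) = u - 1/ε := by ring
    rw [he]
    have h6 : 0 < 1/ε := by positivity
    have h7 : ε * u * (1 + 1/ε) = ε*u + u := by field_simp
    rw [h7]
    nlinarith [mul_nonneg hε.le hu]
  nlinarith [h3, h4, h5]

/-- Exponential decay of `Γ` along vertical lines. -/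
lemma gamma_vertical_bound (σ θ : ℝ) (hσ : 0 < σ) (hθ0 : 0 ≤ θ) (hθ : θ < Real.pi / 2) :
    ∃ C : ℝ, 0 < C ∧ ∀ t : ℝ, ‖Complex.Gamma ((σ:ℂ) + t * Complex.I)‖ ≤
      C * Real.exp (-θ * |t|) := by
  set ε : ℝ := Real.pi / 2 - θ with hε
  have hεpos : 0 < ε := by simp [hε]; linarith
  set C : ℝ := Real.Gamma σ * Real.exp (σ + σ * Real.log (1 + 1/ε)) with hC
  have hΓσ : 0 < Real.Gamma σ := Real.Gamma_pos_of_pos hσ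
  have hCpos : 0 < C := by positivity
  refine ⟨C, hCpos, ?_⟩
  have hpos : ∀ t : ℝ, 0 < t → ‖Complex.Gamma ((σ:ℂ) + t * Complex.I)‖ ≤
      C * Real.exp (-θ * t) := by
    intro t ht
    refine (gamma_abs_le_of_pos σ t hσ ht).trans ?_
    rw [hC, mul_assoc, ← Real.exp_add]
    apply mul_le_mul_of_nonneg_left _ hΓσ.le
    apply Real.exp_le_exp.mpr
    -- need : -(π t - Faux t σ)/2 ≤ σ + σ log(1+1/ε) + (-θ t)
    -- i.e. Faux t σ ≤ 2σ + 2σ log(1+1/ε) + 2 ε t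
    have key : Faux t σ ≤ 2*σ + 2*σ * Real.log (1 + 1/ε) + 2*ε*t := by
      have hA : 2 * t * Real.arctan (σ / t) ≤ 2 * σ := by
        have := arctan_le_self (by positivity : (0:ℝ) ≤ σ / t)
        have h2 : 2*t*Real.arctan (σ/t) ≤ 2*t*(σ/t) := by
          apply mul_le_mul_of_nonneg_left this (by linarith)
        have : 2*t*(σ/t) = 2*σ := by field_simp
        linarith
      have hB : σ * Real.log (1 + t^2/σ^2) ≤ 2*σ*Real.log (1 + 1/ε) + 2*ε*t := by
        have h1 : (1:ℝ) + t^2/σ^2 ≤ (1 + t/σ)^2 := by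
          have hq : (0:ℝ) ≤ t/σ := by positivity
          have he : (t/σ)^2 = t^2/σ^2 := by rw [div_pow]
          nlinarith [sq_nonneg (t/σ)]
        have h2 : Real.log (1 + t^2/σ^2) ≤ 2 * Real.log (1 + t/σ) := by
          calc Real.log (1 + t^2/σ^2) ≤ Real.log ((1 + t/σ)^2) :=
                Real.log_le_log (by positivity) h1
            _ = 2 * Real.log (1 + t/σ) := by
                rw [Real.log_pow]; push_cast; ring
        have h3 : Real.log (1 + t/σ) ≤ Real.log (1 + 1/ε) + ε * (t/σ) :=
          log_one_add_le ε hεpos (by positivity)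
        have h4 : σ * Real.log (1 + t^2/σ^2) ≤ σ * (2 * (Real.log (1 + 1/ε) + ε * (t/σ))) := by
          apply mul_le_mul_of_nonneg_left _ hσ.le
          linarith
        have h5 : σ * (2 * (Real.log (1 + 1/ε) + ε * (t/σ))) = 2*σ*Real.log (1+1/ε) + 2*ε*t := by
          field_simp
        linarith
      unfold Faux
      linarith
    have hεt : ε * t = (Real.pi/2 - θ) * t := by rw [hε]
    nlinarith [key]
  intro t
  rcases lt_trichotomy t 0 with h | h | h
  · have hconj : (σ:ℂ) + t * Complex.I = (starRingEnd ℂ) ((σ:ℂ) + (-t) * Complex.I) := by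
      apply Complex.ext <;> simp
    rw [hconj, Complex.Gamma_conj, Complex.norm_conj]
    have := hpos (-t) (by linarith)
    rw [abs_of_neg h]
    push_cast at this ⊢
    exact this
  · simp only [h, Complex.ofReal_zero, zero_mul, add_zero, abs_zero, mul_zero, neg_zero,
      Real.exp_zero, mul_one]
    rw [Complex.Gamma_ofReal, Complex.norm_real, Real.norm_eq_abs, abs_of_pos hΓσ]
    rw [hC]
    have hl : (0:ℝ) ≤ Real.log (1 + 1/ε) := Real.log_nonneg (by nlinarith [one_div_pos.mpr hεpos])
    have harg : (0:ℝ) ≤ σ + σ * Real.log (1 + 1/ε) := by nlinarith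
    have h1 : (1:ℝ) ≤ Real.exp (σ + σ * Real.log (1 + 1/ε)) := by
      have := Real.add_one_le_exp (σ + σ * Real.log (1 + 1/ε))
      linarith
    nlinarith
  · rw [abs_of_pos h]
    exact hpos t h

lemma one_add_le_exp (ε : ℝ) (hε : 0 < ε) {u : ℝ} (hu : 0 ≤ u) :
    1 + u ≤ (1 + 1/ε) * Real.exp (ε * u) := by
  have h1 : (0:ℝ) < 1 + u := by linarith
  have h2 : (0:ℝ) < 1 + 1/ε := by positivity
  have := log_one_add_le ε hε hu
  calc 1 + u = Real.exp (Real.log (1 + u)) := (Real.exp_log h1).symm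
    _ ≤ Real.exp (Real.log (1 + 1/ε) + ε * u) := Real.exp_le_exp.mpr this
    _ = (1 + 1/ε) * Real.exp (ε * u) := by rw [Real.exp_add, Real.exp_log h2]

lemma integrable_exp_neg_abs {m : ℝ} (hm : 0 < m) :
    Integrable (fun ν : ℝ => Real.exp (-m * |ν|)) := by
  have hIoi : IntegrableOn (fun ν : ℝ => Real.exp (-m * |ν|)) (Set.Ioi 0) := by
    apply (exp_neg_integrableOn_Ioi 0 hm).congr_fun ?_ measurableSet_Ioi
    intro x hx
    simp [abs_of_pos (show (0:ℝ) < x from hx)]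
  rw [← integrableOn_univ, ← @Set.Iio_union_Ici _ _ (0:ℝ), integrableOn_union,
    integrableOn_Ici_iff_integrableOn_Ioi]
  refine ⟨?_, hIoi⟩
  rw [← (Measure.measurePreserving_neg (volume : Measure ℝ)).integrableOn_comp_preimage
      (Homeomorph.neg ℝ).measurableEmbedding]
  simp only [Function.comp_def, abs_neg, Set.neg_preimage, Set.neg_Iio, neg_neg, neg_zero]
  exact hIoi

lemma poly_le_exp (q : ℕ) {ε R : ℝ} (hε : 0 < ε) (hR : 0 ≤ R) {u : ℝ} (hu : 0 ≤ u) :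
    (R + u) ^ q ≤ ((R + 1) * (1 + 1/ε)) ^ q * Real.exp ((q * ε) * u) := by
  have h0 : R + u ≤ (R + 1) * ((1 + 1/ε) * Real.exp (ε * u)) := by
    have h1 := one_add_le_exp ε hε hu
    have h2 : (1:ℝ) ≤ (1 + 1/ε) * Real.exp (ε * u) := by
      have := one_add_le_exp ε hε hu
      nlinarith [Real.exp_pos (ε * u), one_div_pos.mpr hε]
    nlinarith [Real.exp_pos (ε * u), one_div_pos.mpr hε]
  calc (R + u) ^ q ≤ ((R + 1) * ((1 + 1/ε) * Real.exp (ε * u))) ^ q := by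
        apply pow_le_pow_left₀ (by linarith) h0
    _ = ((R + 1) * (1 + 1/ε)) ^ q * Real.exp (ε * u) ^ q := by
        rw [← mul_pow]
        congr 1
        ring
    _ = ((R + 1) * (1 + 1/ε)) ^ q * Real.exp ((q * ε) * u) := by
        congr 1
        rw [← Real.exp_nat_mul]
        congr 1
        ring

lemma integrable_poly_exp (q : ℕ) {m R : ℝ} (hm : 0 < m) (hR : 0 ≤ R) :
    Integrable (fun ν : ℝ => (R + |ν|) ^ q * Real.exp (-m * |ν|)) := by
  set ε : ℝ := m / (2 * (q + 1)) with hεdef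
  have hε : 0 < ε := by positivity
  set K : ℝ := ((R + 1) * (1 + 1/ε)) ^ q with hK
  apply Integrable.mono' ((integrable_exp_neg_abs (by positivity : (0:ℝ) < m/2)).const_mul K)
  · apply Continuous.aestronglyMeasurable
    exact ((continuous_const.add continuous_abs).pow q).mul
      (Real.continuous_exp.comp (continuous_const.mul continuous_abs))
  · filter_upwards with ν
    have h1 : (R + |ν|) ^ q ≤ K * Real.exp ((q * ε) * |ν|) :=
      poly_le_exp q hε hR (abs_nonneg ν)
    have hqε : (q : ℝ) * ε ≤ m / 2 := by
      rw [hεdef]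
      have hq1 : (0:ℝ) < (q:ℝ) + 1 := by positivity
      have he : (q:ℝ) * (m / (2 * ((q:ℝ) + 1))) = m / 2 * ((q:ℝ) / ((q:ℝ) + 1)) := by
        field_simp
      rw [he]
      have : (q:ℝ) / ((q:ℝ) + 1) ≤ 1 := by
        rw [div_le_one hq1]; linarith
      nlinarith [hm.le]
    have h2 : Real.exp ((q * ε) * |ν|) * Real.exp (-m * |ν|) ≤ Real.exp (-(m/2) * |ν|) := by
      rw [← Real.exp_add]
      apply Real.exp_le_exp.mpr
      nlinarith [abs_nonneg ν]
    rw [Real.norm_eq_abs, abs_of_nonneg (by positivity)]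
    calc (R + |ν|) ^ q * Real.exp (-m * |ν|)
        ≤ (K * Real.exp ((q * ε) * |ν|)) * Real.exp (-m * |ν|) := by
          apply mul_le_mul_of_nonneg_right h1 (Real.exp_pos _).le
      _ = K * (Real.exp ((q * ε) * |ν|) * Real.exp (-m * |ν|)) := by ring
      _ ≤ K * Real.exp (-(m/2) * |ν|) := by
          apply mul_le_mul_of_nonneg_left h2 (by positivity)

noncomputable def Pker (a lam x : ℝ) : ℝ :=
  (2 ^ (lam - 2) * lam * a ^ (lam - 1)) /
    (Real.pi * Real.Gamma lam * (a ^ 2 + x ^ 2) ^ (lam / 2))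

noncomputable def gker (a lam ν : ℝ) : ℝ :=
  ‖Complex.Gamma (((lam / 2 : ℝ) : ℂ) + ((lam * ν / (2 * a) : ℝ) : ℂ) * Complex.I)‖ ^ 2

noncomputable def cker (a lam x : ℝ) : ℝ := lam * Real.arctan (x / a) / a

lemma kernel_arg (a lam ν : ℝ) (ha : 0 < a) :
    ((lam : ℂ) * a + Complex.I * (lam * ν)) / (2 * a) =
      ((lam / 2 : ℝ) : ℂ) + ((lam * ν / (2 * a) : ℝ) : ℂ) * Complex.I := by
  have h2a : ((2 : ℂ) * a) ≠ 0 := by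
    simp only [ne_eq, mul_eq_zero, OfNat.ofNat_ne_zero, false_or, Complex.ofReal_eq_zero]
    exact ha.ne'
  rw [div_eq_iff h2a]
  push_cast
  have ha' : (a:ℂ) ≠ 0 := by exact_mod_cast ha.ne'
  field_simp

lemma κ_eq (a lam x ν : ℝ) (ha : 0 < a) :
    κ a lam x ν = Pker a lam x * gker a lam ν * Real.exp (cker a lam x * ν) := by
  unfold κ Pker gker cker
  rw [kernel_arg a lam ν ha]
  congr 2
  field_simp

lemma Pker_pos (a lam x : ℝ) (ha : 0 < a) (hlam : 0 < lam) : 0 < Pker a lam x := by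
  unfold Pker
  have h1 : (0:ℝ) < 2 ^ (lam - 2) := Real.rpow_pos_of_pos (by norm_num) _
  have h2 : (0:ℝ) < a ^ (lam - 1) := Real.rpow_pos_of_pos ha _
  have h3 : (0:ℝ) < Real.Gamma lam := Real.Gamma_pos_of_pos hlam
  have h4 : (0:ℝ) < (a ^ 2 + x ^ 2) ^ (lam / 2) := Real.rpow_pos_of_pos (by positivity) _
  positivity

lemma Pker_le (a lam x : ℝ) (ha : 0 < a) (hlam : 0 < lam) :
    Pker a lam x ≤ Pker a lam 0 := by
  unfold Pker
  have h1 : (0:ℝ) < 2 ^ (lam - 2) := Real.rpow_pos_of_pos (by norm_num) _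
  have h2 : (0:ℝ) < a ^ (lam - 1) := Real.rpow_pos_of_pos ha _
  have h3 : (0:ℝ) < Real.Gamma lam := Real.Gamma_pos_of_pos hlam
  have h5 : (a ^ 2 + (0:ℝ) ^ 2) ^ (lam / 2) ≤ (a ^ 2 + x ^ 2) ^ (lam / 2) := by
    apply Real.rpow_le_rpow (by positivity) (by nlinarith [sq_nonneg x]) (by positivity)
  have h4 : (0:ℝ) < (a ^ 2 + (0:ℝ) ^ 2) ^ (lam / 2) := Real.rpow_pos_of_pos (by positivity) _
  have h6 : Real.pi * Real.Gamma lam * (a^2+(0:ℝ)^2)^(lam/2) ≤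
      Real.pi * Real.Gamma lam * (a^2+x^2)^(lam/2) := by
    apply mul_le_mul_of_nonneg_left h5 (by positivity)
  gcongr

lemma gker_nonneg (a lam ν : ℝ) : 0 ≤ gker a lam ν := by unfold gker; positivity

/-- Master bound: on any bounded region of `x`, the kernel decays exponentially in `ν`,
uniformly in `x`. -/
lemma kernel_bound (lam a R : ℝ) (hlam : 0 < lam) (ha : 0 < a) (hR : 0 ≤ R) :
    ∃ K m : ℝ, 0 < K ∧ 0 < m ∧ ∀ x ν : ℝ, |x| ≤ R →
      κ a lam x ν ≤ K * Real.exp (-m * |ν|) := by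
  classical
  set θ' : ℝ := Real.arctan (R / a) with hθ'
  have hθ'0 : 0 ≤ θ' := by
    rw [hθ', ← Real.arctan_zero]
    exact Real.arctan_strictMono.monotone (by positivity)
  have hθ'lt : θ' < Real.pi / 2 := Real.arctan_lt_pi_div_two _
  set θ : ℝ := (θ' + Real.pi / 2) / 2 with hθdef
  have hθlt : θ < Real.pi / 2 := by rw [hθdef]; linarith
  have hθgt : θ' < θ := by rw [hθdef]; linarith
  have hθ0 : 0 ≤ θ := by rw [hθdef]; positivity
  obtain ⟨C, hCpos, hC⟩ := gamma_vertical_bound (lam / 2) θ (by positivity) hθ0 hθlt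
  refine ⟨Pker a lam 0 * C ^ 2, lam / a * (θ - θ'), by
      have := Pker_pos a lam 0 ha hlam; positivity,
    by have : 0 < θ - θ' := by linarith
       positivity, ?_⟩
  intro x ν hx
  rw [κ_eq a lam x ν ha]
  -- bound gker
  have hg : gker a lam ν ≤ C ^ 2 * Real.exp (-(lam / a * θ) * |ν|) := by
    unfold gker
    have := hC (lam * ν / (2 * a))
    have habs : |lam * ν / (2 * a)| = lam / (2 * a) * |ν| := by
      rw [abs_div, abs_mul, abs_of_pos hlam, abs_of_pos (by positivity : (0:ℝ) < 2 * a)]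
      ring
    calc ‖Complex.Gamma _‖ ^ 2
        ≤ (C * Real.exp (-θ * |lam * ν / (2 * a)|)) ^ 2 := by
          apply pow_le_pow_left₀ (by positivity) this
      _ = C ^ 2 * Real.exp (-(lam / a * θ) * |ν|) := by
          rw [mul_pow, ← Real.exp_nat_mul, habs]
          congr 2
          push_cast
          field_simp
  -- bound the exponential factor
  have hcx : cker a lam x * ν ≤ lam / a * θ' * |ν| := by
    unfold cker
    have hxa : |x / a| ≤ R / a := by
      rw [abs_div, abs_of_pos ha]
      gcongr
    have h1 : |Real.arctan (x / a)| ≤ θ' := by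
      rw [hθ', abs_le]
      refine ⟨?_, Real.arctan_strictMono.monotone (abs_le.mp hxa).2⟩
      rw [← Real.arctan_neg]
      exact Real.arctan_strictMono.monotone (abs_le.mp hxa).1
    calc lam * Real.arctan (x / a) / a * ν ≤ |lam * Real.arctan (x / a) / a * ν| := le_abs_self _
      _ = lam / a * |Real.arctan (x / a)| * |ν| := by
          rw [abs_mul, abs_div, abs_mul, abs_of_pos hlam, abs_of_pos ha]
          ring
      _ ≤ lam / a * θ' * |ν| := by
          apply mul_le_mul_of_nonneg_right _ (abs_nonneg ν)
          apply mul_le_mul_of_nonneg_left h1 (by positivity)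
  have e1 : Real.exp (cker a lam x * ν) ≤ Real.exp (lam / a * θ' * |ν|) :=
    Real.exp_le_exp.mpr hcx
  have hP0 : 0 < Pker a lam 0 := Pker_pos a lam 0 ha hlam
  calc Pker a lam x * gker a lam ν * Real.exp (cker a lam x * ν)
      ≤ Pker a lam 0 * (C ^ 2 * Real.exp (-(lam / a * θ) * |ν|)) *
          Real.exp (lam / a * θ' * |ν|) := by
        apply mul_le_mul _ e1 (Real.exp_pos _).le (by positivity)
        apply mul_le_mul (Pker_le a lam x ha hlam) hg (gker_nonneg a lam ν) hP0.le
    _ = Pker a lam 0 * C ^ 2 * (Real.exp (-(lam / a * θ) * |ν|) *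
          Real.exp (lam / a * θ' * |ν|)) := by ring
    _ = Pker a lam 0 * C ^ 2 * Real.exp (-(lam / a * (θ - θ')) * |ν|) := by
        rw [← Real.exp_add]
        congr 2
        ring

lemma kernel_nonneg (lam a : ℝ) (hlam : 0 < lam) (ha : 0 < a) (x ν : ℝ) :
    0 ≤ κ a lam x ν := by
  rw [κ_eq a lam x ν ha]
  have h1 := Pker_pos a lam x ha hlam
  have h2 := gker_nonneg a lam ν
  positivity

lemma continuous_kernel_nu (a lam x : ℝ) (ha : 0 < a) (hlam : 0 < lam) :
    Continuous (fun ν => κ a lam x ν) := by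
  unfold κ
  apply Continuous.mul
  · apply Continuous.mul continuous_const
    apply Continuous.pow
    apply continuous_norm.comp
    rw [continuous_iff_continuousAt]
    intro ν
    have harg : Continuous (fun ν : ℝ =>
        ((lam : ℂ) * a + Complex.I * (lam * ν)) / (2 * a)) := by
      apply Continuous.div_const
      exact continuous_const.add (continuous_const.mul
        (continuous_const.mul (Complex.continuous_ofReal)))
    apply ContinuousAt.comp _ harg.continuousAt
    apply (Complex.differentiableAt_Gamma _ ?_).continuousAt
    intro m
    rw [kernel_arg a lam ν ha]
    intro h
    rw [Complex.ext_iff] at h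
    simp only [Complex.add_re, Complex.ofReal_re, Complex.mul_re, Complex.I_re, Complex.I_im,
      Complex.ofReal_im, Complex.neg_re, Complex.natCast_re, mul_zero, mul_one, zero_sub,
      sub_zero, neg_zero, add_zero] at h
    have hm : (0:ℝ) ≤ (m:ℝ) := Nat.cast_nonneg m
    have := h.1
    linarith
  · apply Real.continuous_exp.comp
    apply Continuous.mul _ continuous_const
    exact (continuous_const.mul continuous_id).div_const a

lemma hasDerivAt_kernel (lam a : ℝ) (hlam : 0 < lam) (ha : 0 < a) (ν x : ℝ) :
    HasDerivAt (fun y => κ a lam y ν)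
      (κ a lam x ν * (lam * (ν - x) / (a ^ 2 + x ^ 2))) x := by
  have hbx : (0:ℝ) < a ^ 2 + x ^ 2 := by positivity
  have h1 : HasDerivAt (fun y : ℝ => a ^ 2 + y ^ 2) (2 * x) x := by
    simpa using (hasDerivAt_pow 2 x).const_add (a ^ 2)
  have hu : HasDerivAt (fun y : ℝ => (a ^ 2 + y ^ 2) ^ (lam / 2))
      ((2 * x) * (lam / 2) * (a ^ 2 + x ^ 2) ^ (lam / 2 - 1)) x :=
    h1.rpow_const (Or.inl hbx.ne')
  have hd : HasDerivAt (fun y : ℝ => Real.pi * Real.Gamma lam * (a ^ 2 + y ^ 2) ^ (lam / 2))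
      (Real.pi * Real.Gamma lam * ((2 * x) * (lam / 2) * (a ^ 2 + x ^ 2) ^ (lam / 2 - 1))) x :=
    hu.const_mul _
  have hΓ : (0:ℝ) < Real.Gamma lam := Real.Gamma_pos_of_pos hlam
  have hux : (0:ℝ) < (a ^ 2 + x ^ 2) ^ (lam / 2) := Real.rpow_pos_of_pos hbx _
  have hdx : Real.pi * Real.Gamma lam * (a ^ 2 + x ^ 2) ^ (lam / 2) ≠ 0 := by positivity
  have hdiv : HasDerivAt (fun y : ℝ => (2 ^ (lam - 2) * lam * a ^ (lam - 1)) /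
      (Real.pi * Real.Gamma lam * (a ^ 2 + y ^ 2) ^ (lam / 2)))
      ((0 * (Real.pi * Real.Gamma lam * (a ^ 2 + x ^ 2) ^ (lam / 2)) -
        (2 ^ (lam - 2) * lam * a ^ (lam - 1)) *
          (Real.pi * Real.Gamma lam * ((2 * x) * (lam / 2) * (a ^ 2 + x ^ 2) ^ (lam / 2 - 1)))) /
        (Real.pi * Real.Gamma lam * (a ^ 2 + x ^ 2) ^ (lam / 2)) ^ 2) x :=
    (hasDerivAt_const x _).div hd hdx
  have harctan : HasDerivAt (fun y : ℝ => lam * ν / a * Real.arctan (y / a))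
      (lam * ν / a * (1 / (1 + (x / a) ^ 2) * (1 / a))) x := by
    have h2 : HasDerivAt (fun y : ℝ => y / a) (1 / a) x := by
      simpa using (hasDerivAt_id x).div_const a
    exact ((Real.hasDerivAt_arctan (x / a)).comp x h2).const_mul (lam * ν / a)
  have hexp := harctan.exp
  have htot := (hdiv.mul_const
    (‖Complex.Gamma ((lam * a + Complex.I * (lam * ν)) / (2 * a))‖ ^ 2)).mul hexp
  refine htot.congr_deriv (Eq.symm ?_)
  unfold κ
  rw [Real.rpow_sub hbx, Real.rpow_one]
  have hba : (0:ℝ) < 1 + (x / a) ^ 2 := by positivity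
  field_simp
  ring

lemma integrable_kernel_poly (lam a : ℝ) (hlam : 0 < lam) (ha : 0 < a) (x : ℝ) (q : ℕ) :
    Integrable (fun ν : ℝ => κ a lam x ν * (ν - x) ^ q) := by
  obtain ⟨K, m, hK, hm, hb⟩ := kernel_bound lam a |x| hlam ha (abs_nonneg x)
  apply Integrable.mono' ((integrable_poly_exp q hm (abs_nonneg x)).const_mul K)
  · exact ((continuous_kernel_nu a lam x ha hlam).mul
      ((continuous_id.sub continuous_const).pow q)).aestronglyMeasurable
  · filter_upwards with ν
    rw [Real.norm_eq_abs, abs_mul, abs_of_nonneg (kernel_nonneg lam a hlam ha x ν), abs_pow]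
    have h1 : κ a lam x ν ≤ K * Real.exp (-m * |ν|) := hb x ν le_rfl
    have h2 : |ν - x| ≤ |x| + |ν| := by
      have := abs_sub ν x
      linarith [abs_sub ν x]
    calc κ a lam x ν * |ν - x| ^ q ≤ (K * Real.exp (-m * |ν|)) * (|x| + |ν|) ^ q := by
          apply mul_le_mul h1 (pow_le_pow_left₀ (abs_nonneg _) h2 q) (by positivity)
            (by positivity)
      _ = K * ((|x| + |ν|) ^ q * Real.exp (-m * |ν|)) := by ring

lemma hasDerivAt_F (lam a : ℝ) (hlam : 0 < lam) (ha : 0 < a) (p : ℕ) (ν x : ℝ) :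
    HasDerivAt (fun y => κ a lam y ν * (ν - y) ^ p)
      (κ a lam x ν * (lam * (ν - x) ^ (p + 1) / (a ^ 2 + x ^ 2) -
        p * (ν - x) ^ (p - 1))) x := by
  have hpow : HasDerivAt (fun y : ℝ => (ν - y) ^ p) (-(p * (ν - x) ^ (p - 1))) x := by
    have h := (hasDerivAt_pow p (ν - x)).comp x ((hasDerivAt_const x ν).sub (hasDerivAt_id x))
    exact h.congr_deriv (by ring)
  have h := (hasDerivAt_kernel lam a hlam ha ν x).mul hpow
  refine h.congr_deriv (Eq.symm ?_)
  have hbx : (a:ℝ) ^ 2 + x ^ 2 ≠ 0 := by positivity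
  field_simp
  ring

lemma hasDerivAt_centralMoment (lam a : ℝ) (hlam : 0 < lam) (ha : 0 < a) (p : ℕ) (x₀ : ℝ) :
    HasDerivAt (fun y => centralMoment a lam p y)
      (lam / (a ^ 2 + x₀ ^ 2) * centralMoment a lam (p + 1) x₀ -
        p * centralMoment a lam (p - 1) x₀) x₀ := by
  obtain ⟨K, m, hK, hm, hb⟩ := kernel_bound lam a (|x₀| + 1) hlam ha (by positivity)
  set R : ℝ := |x₀| + 1 with hR
  set bound : ℝ → ℝ := fun ν => K * Real.exp (-m * |ν|) *
    (lam * (R + |ν|) ^ (p + 1) / a ^ 2 + p * (R + |ν|) ^ (p - 1)) with hbound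
  have hbound_int : Integrable bound := by
    apply Integrable.congr (((integrable_poly_exp (p + 1) (m := m) (R := R) hm
      (by positivity)).const_mul (K * lam / a ^ 2)).add
      ((integrable_poly_exp (p - 1) (m := m) (R := R) hm (by positivity)).const_mul (K * p)))
    filter_upwards with ν
    rw [hbound]
    simp only [Pi.add_apply]
    field_simp
  have hF_meas : ∀ᶠ x in 𝓝 x₀, AEStronglyMeasurable
      (fun ν : ℝ => κ a lam x ν * (ν - x) ^ p) (volume : Measure ℝ) :=
    Eventually.of_forall fun x => ((continuous_kernel_nu a lam x ha hlam).mul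
      ((continuous_id.sub continuous_const).pow p)).aestronglyMeasurable
  have hF'_meas : AEStronglyMeasurable (fun ν : ℝ => κ a lam x₀ ν *
      (lam * (ν - x₀) ^ (p + 1) / (a ^ 2 + x₀ ^ 2) - p * (ν - x₀) ^ (p - 1)))
      (volume : Measure ℝ) :=
    ((continuous_kernel_nu a lam x₀ ha hlam).mul (((continuous_const.mul
      ((continuous_id.sub continuous_const).pow (p + 1))).div_const _).sub
      (continuous_const.mul ((continuous_id.sub continuous_const).pow
        (p - 1))))).aestronglyMeasurable
  have h_bound : ∀ᵐ ν : ℝ, ∀ x ∈ Metric.ball x₀ 1,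
      ‖κ a lam x ν * (lam * (ν - x) ^ (p + 1) / (a ^ 2 + x ^ 2) -
        p * (ν - x) ^ (p - 1))‖ ≤ bound ν := by
    filter_upwards with ν
    intro x hx
    have hxR : |x| ≤ R := by
      rw [Metric.mem_ball, Real.dist_eq] at hx
      rw [hR]
      have := abs_sub_abs_le_abs_sub x x₀
      linarith
    have hκb : κ a lam x ν ≤ K * Real.exp (-m * |ν|) := hb x ν hxR
    have hν : |ν - x| ≤ R + |ν| := by
      have := abs_sub ν x
      linarith [abs_sub ν x, hxR]
    rw [Real.norm_eq_abs, abs_mul, abs_of_nonneg (kernel_nonneg lam a hlam ha x ν)]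
    have hinner : |lam * (ν - x) ^ (p + 1) / (a ^ 2 + x ^ 2) - p * (ν - x) ^ (p - 1)| ≤
        lam * (R + |ν|) ^ (p + 1) / a ^ 2 + p * (R + |ν|) ^ (p - 1) := by
      have habs : ∀ q : ℕ, |ν - x| ^ q ≤ (R + |ν|) ^ q := fun q =>
        pow_le_pow_left₀ (abs_nonneg _) hν q
      calc |lam * (ν - x) ^ (p + 1) / (a ^ 2 + x ^ 2) - p * (ν - x) ^ (p - 1)| ≤
          |lam * (ν - x) ^ (p + 1) / (a ^ 2 + x ^ 2)| + |p * (ν - x) ^ (p - 1)| :=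
            abs_sub _ _
        _ ≤ lam * (R + |ν|) ^ (p + 1) / a ^ 2 + p * (R + |ν|) ^ (p - 1) := by
            apply add_le_add
            · rw [abs_div, abs_mul, abs_pow, abs_of_pos hlam,
                abs_of_pos (by positivity : (0:ℝ) < a ^ 2 + x ^ 2)]
              have h1 := habs (p + 1)
              have h2 : a ^ 2 ≤ a ^ 2 + x ^ 2 := by nlinarith [sq_nonneg x]
              gcongr
            · rw [abs_mul, abs_pow, Nat.abs_cast]
              gcongr
    calc κ a lam x ν * |lam * (ν - x) ^ (p + 1) / (a ^ 2 + x ^ 2) - p * (ν - x) ^ (p - 1)|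
        ≤ (K * Real.exp (-m * |ν|)) *
          (lam * (R + |ν|) ^ (p + 1) / a ^ 2 + p * (R + |ν|) ^ (p - 1)) :=
          mul_le_mul hκb hinner (abs_nonneg _) (by positivity)
      _ = bound ν := rfl
  have h_diff : ∀ᵐ ν : ℝ, ∀ x ∈ Metric.ball x₀ 1,
      HasDerivAt (fun y => κ a lam y ν * (ν - y) ^ p)
        (κ a lam x ν * (lam * (ν - x) ^ (p + 1) / (a ^ 2 + x ^ 2) -
          p * (ν - x) ^ (p - 1))) x := by
    filter_upwards with ν
    intro x _
    exact hasDerivAt_F lam a hlam ha p ν x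
  have key := hasDerivAt_integral_of_dominated_loc_of_deriv_le (Metric.ball_mem_nhds x₀ one_pos) hF_meas
    (integrable_kernel_poly lam a hlam ha x₀ p) hF'_meas h_bound hbound_int h_diff
  obtain ⟨hint, hder⟩ := key
  have hrw : (∫ ν, κ a lam x₀ ν * (lam * (ν - x₀) ^ (p + 1) / (a ^ 2 + x₀ ^ 2) -
      p * (ν - x₀) ^ (p - 1))) =
      lam / (a ^ 2 + x₀ ^ 2) * centralMoment a lam (p + 1) x₀ -
        p * centralMoment a lam (p - 1) x₀ := by
    have heq : (fun ν => κ a lam x₀ ν * (lam * (ν - x₀) ^ (p + 1) / (a ^ 2 + x₀ ^ 2) -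
        p * (ν - x₀) ^ (p - 1))) = fun ν =>
        lam / (a ^ 2 + x₀ ^ 2) * (κ a lam x₀ ν * (ν - x₀) ^ (p + 1)) -
          p * (κ a lam x₀ ν * (ν - x₀) ^ (p - 1)) := by
      funext ν
      have hbx : (a:ℝ) ^ 2 + x₀ ^ 2 ≠ 0 := by positivity
      field_simp
    rw [heq, integral_sub (((integrable_kernel_poly lam a hlam ha x₀ (p + 1)).const_mul _))
      (((integrable_kernel_poly lam a hlam ha x₀ (p - 1)).const_mul _)),
      integral_const_mul, integral_const_mul]
    rfl
  rw [hrw] at hder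
  exact hder

/-- Recurrence relation for the central moments:
`λ μ_{p+1}(x)/(a²+x²) = p μ_{p−1}(x) + (μ_p)'(x)`. -/
theorem centralMoment_recurrence (lam a : ℝ) (hlam : 0 < lam) (ha : 0 < a)
    (p : ℕ) (hp : 1 ≤ p) :
    Differentiable ℝ (fun y => centralMoment a lam p y) ∧
    ∀ x : ℝ, lam * centralMoment a lam (p + 1) x / (a ^ 2 + x ^ 2) =
      p * centralMoment a lam (p - 1) x +
        deriv (fun y => centralMoment a lam p y) x := by
  constructor
  · intro x
    exact (hasDerivAt_centralMoment lam a hlam ha p x).differentiableAt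
  · intro x
    rw [(hasDerivAt_centralMoment lam a hlam ha p x).deriv]
    ring
end

section
/- Let a > 0 and let p be a nonnegative integer. There exists a family of polynomial functions Ӷ^a_{i,j,p} : ℝ → ℝ, indexed by integers i, j ≥ 0 with 2i + j ≤ p and independent of λ and ν, such that for all λ > 0, x ∈ ℝ and ν ∈ ℝ: (a² + x²)^p · (∂^p/∂x^p) κ^a_λ(x,ν) = Σ_{2i+j ≤ p, i,j ≥ 0} λ^{i+j} (ν − x)^j Ӷ^a_{i,j,p}(x) κ^a_λ(x,ν). -/
open MeasureTheory Real Filter Topology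

open Polynomial

lemma kernel_hasDerivAt (a lam ν : ℝ) (ha : 0 < a) (x : ℝ) :
    HasDerivAt (fun y => κ a lam y ν)
      (κ a lam x ν * (lam * (ν - x) / (a ^ 2 + x ^ 2))) x := by
  have hx2 : (0:ℝ) < a ^ 2 + x ^ 2 := by positivity
  have hq : HasDerivAt (fun y : ℝ => a ^ 2 + y ^ 2) (2 * x) x := by
    simpa using (hasDerivAt_pow 2 x).const_add (a ^ 2)
  have hr : HasDerivAt (fun y : ℝ => (a ^ 2 + y ^ 2) ^ (lam / 2))
      (2 * x * (lam / 2) * (a ^ 2 + x ^ 2) ^ (lam / 2 - 1)) x :=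
    hq.rpow_const (Or.inl hx2.ne')
  have hrne : ((a ^ 2 + x ^ 2) ^ (lam / 2) : ℝ) ≠ 0 := (Real.rpow_pos_of_pos hx2 _).ne'
  have hinv := hr.inv hrne
  have harc : HasDerivAt (fun y : ℝ => Real.arctan (y / a))
      (1 / (1 + (x / a) ^ 2) * (1 / a)) x := by
    have := (Real.hasDerivAt_arctan (x / a)).comp x ((hasDerivAt_id x).div_const a)
    simpa [Function.comp_def] using this
  have hexp : HasDerivAt (fun y : ℝ => Real.exp (lam * ν / a * Real.arctan (y / a)))
      (Real.exp (lam * ν / a * Real.arctan (x / a)) *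
        (lam * ν / a * (1 / (1 + (x / a) ^ 2) * (1 / a)))) x :=
    (harc.const_mul (lam * ν / a)).exp
  have hu := hinv.mul hexp
  have hu' : HasDerivAt (fun y : ℝ => ((a ^ 2 + y ^ 2) ^ (lam / 2))⁻¹ *
      Real.exp (lam * ν / a * Real.arctan (y / a)))
      ((((a ^ 2 + x ^ 2) ^ (lam / 2))⁻¹ * Real.exp (lam * ν / a * Real.arctan (x / a))) *
        (lam * (ν - x) / (a ^ 2 + x ^ 2))) x := by
    refine hu.congr_deriv ?_
    simp only [Pi.inv_apply]
    have hsub : (a ^ 2 + x ^ 2) ^ (lam / 2 - 1)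
        = (a ^ 2 + x ^ 2) ^ (lam / 2) / (a ^ 2 + x ^ 2) := by
      rw [Real.rpow_sub hx2, Real.rpow_one]
    rw [hsub]
    have h1 : (1 + (x / a) ^ 2) = (a ^ 2 + x ^ 2) / a ^ 2 := by
      field_simp
    rw [h1]
    field_simp
    ring
  have hC := hu'.const_mul ((2 ^ (lam - 2) * lam * a ^ (lam - 1)) / (Real.pi * Real.Gamma lam) *
      ‖Complex.Gamma ((lam * a + Complex.I * (lam * ν)) / (2 * a))‖ ^ 2)
  have hfun : (fun y => κ a lam y ν) = fun y =>
      (2 ^ (lam - 2) * lam * a ^ (lam - 1)) / (Real.pi * Real.Gamma lam) *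
        ‖Complex.Gamma ((lam * a + Complex.I * (lam * ν)) / (2 * a))‖ ^ 2 *
        (((a ^ 2 + y ^ 2) ^ (lam / 2))⁻¹ *
          Real.exp (lam * ν / a * Real.arctan (y / a))) := by
    funext y
    unfold κ
    ring
  rw [hfun]
  refine hC.congr_deriv ?_
  unfold κ
  ring

noncomputable def bSum (n : ℕ) (G : ℕ → ℕ → Polynomial ℝ) (lam x ν : ℝ) : ℝ :=
  ∑ i ∈ Finset.range n, ∑ j ∈ Finset.range n,
    lam ^ (i + j) * (ν - x) ^ j * (G i j).eval x

noncomputable def shiftI (f : ℕ → ℕ → Polynomial ℝ) : ℕ → ℕ → Polynomial ℝ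
  | 0, _ => 0
  | i + 1, j => f i j

noncomputable def shiftJ (f : ℕ → ℕ → Polynomial ℝ) : ℕ → ℕ → Polynomial ℝ
  | _, 0 => 0
  | i, j + 1 => f i j

noncomputable def newG (a : ℝ) (p : ℕ) (G : ℕ → ℕ → Polynomial ℝ) (i j : ℕ) : Polynomial ℝ :=
  (X ^ 2 + C (a ^ 2)) * derivative (G i j) - C (2 * (p : ℝ)) * X * G i j
    + shiftI (fun i' j' => C (-((j' : ℝ) + 1)) * (X ^ 2 + C (a ^ 2)) * G i' (j' + 1)) i j
    + shiftJ G i j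

lemma newG_support {p : ℕ} {G : ℕ → ℕ → Polynomial ℝ}
    (hG : ∀ i j, ¬ (2 * i + j ≤ p) → G i j = 0) (a : ℝ) :
    ∀ i j, ¬ (2 * i + j ≤ p + 1) → newG a p G i j = 0 := by
  intro i j h
  have h0 : G i j = 0 := hG i j (by omega)
  unfold newG
  rcases i with _ | i <;> rcases j with _ | j
  · omega
  · have h2 : G 0 j = 0 := hG 0 j (by omega)
    simp [shiftI, shiftJ, h0, h2]
  · have h2 : G i 1 = 0 := hG i 1 (by omega)
    simp [shiftI, shiftJ, h0, h2]
  · have h2 : G i (j + 2) = 0 := hG i (j + 2) (by omega)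
    have h3 : G (i + 1) j = 0 := hG (i + 1) j (by omega)
    simp [shiftI, shiftJ, h0, h2, h3]

lemma sq_reduce {n m : ℕ} (h : m ≤ n) (F : ℕ → ℕ → ℝ)
    (hF : ∀ i j, m ≤ i ∨ m ≤ j → F i j = 0) :
    ∑ i ∈ Finset.range n, ∑ j ∈ Finset.range n, F i j
      = ∑ i ∈ Finset.range m, ∑ j ∈ Finset.range m, F i j := by
  rw [← Finset.sum_subset (Finset.range_subset_range.2 h)
      (fun i _ hi => Finset.sum_eq_zero fun j _ =>
        hF i j (Or.inl (by simp at hi; omega)))]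
  exact Finset.sum_congr rfl fun i _ =>
    (Finset.sum_subset (Finset.range_subset_range.2 h)
      (fun j _ hj => hF i j (Or.inr (by simp at hj; omega)))).symm

lemma key_sum (a : ℝ) (p : ℕ) (G : ℕ → ℕ → Polynomial ℝ)
    (hG : ∀ i j, ¬ (2 * i + j ≤ p) → G i j = 0) (lam x ν : ℝ) :
    bSum (p + 2) (newG a p G) lam x ν
      = (a ^ 2 + x ^ 2) * (∑ i ∈ Finset.range (p + 1), ∑ j ∈ Finset.range (p + 1),
          lam ^ (i + j) * (((j : ℝ) * (ν - x) ^ (j - 1) * (-1)) * (G i j).eval x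
            + (ν - x) ^ j * ((derivative (G i j)).eval x)))
        + (lam * (ν - x) - 2 * (p : ℝ) * x) * bSum (p + 1) G lam x ν := by
  have split : ∀ i j, lam ^ (i + j) * (ν - x) ^ j * (newG a p G i j).eval x
      = (lam ^ (i + j) * (ν - x) ^ j * ((x ^ 2 + a ^ 2) * (derivative (G i j)).eval x))
        + (lam ^ (i + j) * (ν - x) ^ j * (-(2 * (p : ℝ) * x) * (G i j).eval x))
        + (lam ^ (i + j) * (ν - x) ^ j *
            (shiftI (fun i' j' => C (-((j' : ℝ) + 1)) * (X ^ 2 + C (a ^ 2)) * G i' (j' + 1)) i j).eval x)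
        + (lam ^ (i + j) * (ν - x) ^ j * (shiftJ G i j).eval x) := by
    intro i j
    unfold newG
    simp only [eval_add, eval_sub, eval_mul, eval_pow, eval_X, eval_C]
    ring
  unfold bSum
  simp only [split, Finset.sum_add_distrib]
  have hS1 : (∑ i ∈ Finset.range (p + 2), ∑ j ∈ Finset.range (p + 2),
        lam ^ (i + j) * (ν - x) ^ j * ((x ^ 2 + a ^ 2) * (derivative (G i j)).eval x))
      = (a ^ 2 + x ^ 2) * ∑ i ∈ Finset.range (p + 1), ∑ j ∈ Finset.range (p + 1),
          lam ^ (i + j) * ((ν - x) ^ j * ((derivative (G i j)).eval x)) := by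
    rw [sq_reduce (n := p + 2) (m := p + 1) (by omega)
      (fun i j => lam ^ (i + j) * (ν - x) ^ j * ((x ^ 2 + a ^ 2) * (derivative (G i j)).eval x))
      (fun i j h => by
        have h0 : G i j = 0 := hG i j (by rcases h with h | h <;> omega)
        simp [h0])]
    rw [Finset.mul_sum]
    refine Finset.sum_congr rfl fun i _ => ?_
    rw [Finset.mul_sum]
    exact Finset.sum_congr rfl fun j _ => by ring
  have hS2 : (∑ i ∈ Finset.range (p + 2), ∑ j ∈ Finset.range (p + 2),
        lam ^ (i + j) * (ν - x) ^ j * (-(2 * (p : ℝ) * x) * (G i j).eval x))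
      = (-(2 * (p : ℝ) * x)) * ∑ i ∈ Finset.range (p + 1), ∑ j ∈ Finset.range (p + 1),
          lam ^ (i + j) * (ν - x) ^ j * (G i j).eval x := by
    rw [sq_reduce (n := p + 2) (m := p + 1) (by omega)
      (fun i j => lam ^ (i + j) * (ν - x) ^ j * (-(2 * (p : ℝ) * x) * (G i j).eval x))
      (fun i j h => by
        have h0 : G i j = 0 := hG i j (by rcases h with h | h <;> omega)
        simp [h0])]
    rw [Finset.mul_sum]
    refine Finset.sum_congr rfl fun i _ => ?_
    rw [Finset.mul_sum]
    exact Finset.sum_congr rfl fun j _ => by ring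
  have hS3 : (∑ i ∈ Finset.range (p + 2), ∑ j ∈ Finset.range (p + 2),
        lam ^ (i + j) * (ν - x) ^ j *
          (shiftI (fun i' j' => C (-((j' : ℝ) + 1)) * (X ^ 2 + C (a ^ 2)) * G i' (j' + 1)) i j).eval x)
      = (a ^ 2 + x ^ 2) * ∑ i ∈ Finset.range (p + 1), ∑ j ∈ Finset.range (p + 1),
          lam ^ (i + j) * (((j : ℝ) * (ν - x) ^ (j - 1) * (-1)) * (G i j).eval x) := by
    rw [Finset.sum_range_succ']
    have h0 : (∑ j ∈ Finset.range (p + 2), lam ^ (0 + j) * (ν - x) ^ j *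
        (shiftI (fun i' j' => C (-((j' : ℝ) + 1)) * (X ^ 2 + C (a ^ 2)) * G i' (j' + 1)) 0 j).eval x) = 0 := by
      simp [shiftI]
    rw [h0, add_zero, Finset.mul_sum]
    refine Finset.sum_congr rfl fun i hi => ?_
    have hi' : i < p + 1 := Finset.mem_range.1 hi
    -- LHS inner : over range (p+2), reduce to range p
    rw [show (∑ j ∈ Finset.range (p + 2), lam ^ (i + 1 + j) * (ν - x) ^ j *
        (shiftI (fun i' j' => C (-((j' : ℝ) + 1)) * (X ^ 2 + C (a ^ 2)) * G i' (j' + 1)) (i + 1) j).eval x)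
      = ∑ j ∈ Finset.range p, lam ^ (i + 1 + j) * (ν - x) ^ j *
          (shiftI (fun i' j' => C (-((j' : ℝ) + 1)) * (X ^ 2 + C (a ^ 2)) * G i' (j' + 1)) (i + 1) j).eval x
      from (Finset.sum_subset (Finset.range_subset_range.2 (by omega)) (fun j _ hj => by
        have hj' : p ≤ j := by simp at hj; omega
        have h0 : G i (j + 1) = 0 := hG i (j + 1) (by omega)
        simp [shiftI, h0])).symm]
    rw [Finset.mul_sum, Finset.sum_range_succ']
    have h00 : (a ^ 2 + x ^ 2) * (lam ^ (i + 0) * (((0 : ℕ) : ℝ) * (ν - x) ^ (0 - 1) * (-1) * (G i 0).eval x)) = 0 := by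
      simp
    rw [h00, add_zero]
    refine Finset.sum_congr rfl fun j _ => ?_
    simp only [shiftI, eval_mul, eval_add, eval_pow, eval_X, eval_C, Nat.add_sub_cancel,
      Nat.cast_add, Nat.cast_one]
    ring
  have hS4 : (∑ i ∈ Finset.range (p + 2), ∑ j ∈ Finset.range (p + 2),
        lam ^ (i + j) * (ν - x) ^ j * (shiftJ G i j).eval x)
      = lam * (ν - x) * ∑ i ∈ Finset.range (p + 1), ∑ j ∈ Finset.range (p + 1),
          lam ^ (i + j) * (ν - x) ^ j * (G i j).eval x := by
    rw [Finset.sum_range_succ]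
    have hrow : (∑ j ∈ Finset.range (p + 2),
        lam ^ (p + 1 + j) * (ν - x) ^ j * (shiftJ G (p + 1) j).eval x) = 0 := by
      refine Finset.sum_eq_zero fun j _ => ?_
      rcases j with _ | j
      · simp [shiftJ]
      · have h0 : G (p + 1) j = 0 := hG (p + 1) j (by omega)
        simp [shiftJ, h0]
    rw [hrow, add_zero, Finset.mul_sum]
    refine Finset.sum_congr rfl fun i _ => ?_
    rw [Finset.sum_range_succ']
    have h0 : lam ^ (i + 0) * (ν - x) ^ 0 * (shiftJ G i 0).eval x = 0 := by simp [shiftJ]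
    rw [h0, add_zero, Finset.mul_sum]
    refine Finset.sum_congr rfl fun j _ => ?_
    simp only [shiftJ]
    ring
  rw [hS1, hS2, hS3, hS4]
  have : (∑ i ∈ Finset.range (p + 1), ∑ j ∈ Finset.range (p + 1),
      lam ^ (i + j) * (((j : ℝ) * (ν - x) ^ (j - 1) * (-1)) * (G i j).eval x
        + (ν - x) ^ j * ((derivative (G i j)).eval x)))
      = (∑ i ∈ Finset.range (p + 1), ∑ j ∈ Finset.range (p + 1),
          lam ^ (i + j) * (((j : ℝ) * (ν - x) ^ (j - 1) * (-1)) * (G i j).eval x))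
        + (∑ i ∈ Finset.range (p + 1), ∑ j ∈ Finset.range (p + 1),
          lam ^ (i + j) * ((ν - x) ^ j * ((derivative (G i j)).eval x))) := by
    simp only [mul_add, Finset.sum_add_distrib]
  rw [this]
  ring

lemma main_kernel (a : ℝ) (ha : 0 < a) (p : ℕ) :
    ∃ G : ℕ → ℕ → Polynomial ℝ, (∀ i j, ¬ (2 * i + j ≤ p) → G i j = 0) ∧
      ∀ lam x ν : ℝ,
        (a ^ 2 + x ^ 2) ^ p * iteratedDeriv p (fun y => κ a lam y ν) x
          = bSum (p + 1) G lam x ν * κ a lam x ν := by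
  induction p with
  | zero =>
    refine ⟨fun i j => if i = 0 ∧ j = 0 then 1 else 0, ?_, ?_⟩
    · intro i j h
      have hne : ¬ (i = 0 ∧ j = 0) := by omega
      simp [hne]
    · intro lam x ν
      simp [bSum, iteratedDeriv_zero]
  | succ p IH =>
    obtain ⟨G, hsupp, heq⟩ := IH
    refine ⟨newG a p G, newG_support hsupp a, ?_⟩
    intro lam x ν
    have hx2 : ∀ y : ℝ, (0 : ℝ) < a ^ 2 + y ^ 2 := fun y => by positivity
    have hfun : iteratedDeriv p (fun y => κ a lam y ν)
        = fun y => bSum (p + 1) G lam y ν * κ a lam y ν * ((a ^ 2 + y ^ 2) ^ p)⁻¹ := by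
      funext y
      have h := heq lam y ν
      have hne : ((a ^ 2 + y ^ 2) ^ p : ℝ) ≠ 0 := pow_ne_zero _ (hx2 y).ne'
      field_simp
      linarith [h]
    rw [iteratedDeriv_succ, hfun]
    have hS : HasDerivAt (fun y => bSum (p + 1) G lam y ν)
        (∑ i ∈ Finset.range (p + 1), ∑ j ∈ Finset.range (p + 1),
          lam ^ (i + j) * (((j : ℝ) * (ν - x) ^ (j - 1) * (-1)) * (G i j).eval x
            + (ν - x) ^ j * ((derivative (G i j)).eval x))) x := by
      unfold bSum
      simp only [mul_assoc]
      refine HasDerivAt.fun_sum fun i _ => ?_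
      refine HasDerivAt.fun_sum fun j _ => ?_
      have hp := ((((hasDerivAt_id x).const_sub ν).pow j).mul
        (Polynomial.hasDerivAt (G i j) x)).const_mul (lam ^ (i + j))
      simp only [id_eq, Pi.pow_apply] at hp
      refine hp.congr_deriv ?_
      ring
    have hκ := kernel_hasDerivAt a lam ν ha x
    have hq : HasDerivAt (fun y : ℝ => a ^ 2 + y ^ 2) (2 * x) x := by
      simpa using (hasDerivAt_pow 2 x).const_add (a ^ 2)
    have hinv := (hq.pow p).inv (pow_ne_zero p (hx2 x).ne')
    have htot := (hS.mul hκ).mul hinv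
    simp only [Pi.mul_apply, Pi.inv_apply, Pi.pow_apply] at htot
    rw [show deriv (fun y => bSum (p + 1) G lam y ν * κ a lam y ν * ((a ^ 2 + y ^ 2) ^ p)⁻¹) x = _ from htot.deriv, key_sum a p G hsupp lam x ν]
    set D := ∑ i ∈ Finset.range (p + 1), ∑ j ∈ Finset.range (p + 1),
          lam ^ (i + j) * (((j : ℝ) * (ν - x) ^ (j - 1) * (-1)) * (G i j).eval x
            + (ν - x) ^ j * ((derivative (G i j)).eval x)) with hD
    set S := bSum (p + 1) G lam x ν with hSdef
    set K := κ a lam x ν with hK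
    have hrne : (a ^ 2 + x ^ 2) ≠ 0 := (hx2 x).ne'
    cases p with
    | zero =>
      field_simp
      ring
    | succ q =>
      have hq1 : q + 1 - 1 = q := rfl
      rw [hq1]
      field_simp
      ring

/-- There exist polynomials `Ӷ^a_{i,j,p}`, independent of `λ` and `ν`, such that
`(a²+x²)^p ∂^p/∂x^p κ^a_λ(x,ν) = Σ_{2i+j≤p} λ^{i+j} (ν−x)^j Ӷ^a_{i,j,p}(x) κ^a_λ(x,ν)`. -/
theorem iteratedDeriv_kernel (a : ℝ) (ha : 0 < a) (p : ℕ) :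
    ∃ G : ℕ → ℕ → Polynomial ℝ, ∀ lam > (0 : ℝ), ∀ x ν : ℝ,
      (a ^ 2 + x ^ 2) ^ p * iteratedDeriv p (fun y => κ a lam y ν) x =
        ∑ ij ∈ (Finset.range (p + 1) ×ˢ Finset.range (p + 1)).filter
            (fun ij => 2 * ij.1 + ij.2 ≤ p),
          lam ^ (ij.1 + ij.2) * (ν - x) ^ ij.2 * (G ij.1 ij.2).eval x *
            κ a lam x ν := by
  obtain ⟨G, hsupp, heq⟩ := main_kernel a ha p
  refine ⟨G, fun lam _ x ν => ?_⟩
  rw [heq lam x ν]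
  have hprod : bSum (p + 1) G lam x ν * κ a lam x ν
      = ∑ ij ∈ Finset.range (p + 1) ×ˢ Finset.range (p + 1),
          lam ^ (ij.1 + ij.2) * (ν - x) ^ ij.2 * (G ij.1 ij.2).eval x * κ a lam x ν := by
    rw [Finset.sum_product]
    unfold bSum
    rw [Finset.sum_mul]
    exact Finset.sum_congr rfl fun i _ => by rw [Finset.sum_mul]
  rw [hprod]
  refine (Finset.sum_filter_of_ne fun ij _ hne => ?_).symm
  by_contra hc
  have h0 : G ij.1 ij.2 = 0 := hsupp _ _ hc
  simp [h0] at hne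
end
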